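/- arXiv:2503.12027 — 3 statements merged into one kernel-verified Lean document; each statement's English description precedes it below -/
import Mathlib

section
/- For all positive integers s, k and n, the series ∑_{q=1}^∞ μ(q) c_q^s(n^s) / J_{s+k}(q) converges and equals ζ(s+k) · J_k(n)/n^k, where μ is the Möbius function and ζ is the Riemann zeta function. -/
open Finset Filter

/-- The generalized GCD `(m, n)_s`: the largest positive integer of the form `l ^ s`
dividing both `m` and `n`. -/
noncomputable def genGcd (s m n : ℕ) : ℕ :=
  letI := Classical.dec
  ((Nat.gcd m n).divisors.filter fun d => ∃ l : ℕ, l ^ s = d).sup id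

/-- The Cohen–Ramanujan sum `c_r^s(n) = ∑_{h=1, (h, r^s)_s = 1}^{r^s} e^{2πinh/r^s}`. -/
noncomputable def cohenRamanujanSum (s r n : ℕ) : ℂ :=
  ∑ h ∈ Finset.Icc 1 (r ^ s),
    if genGcd s h (r ^ s) = 1 then
      Complex.exp (2 * Real.pi * Complex.I * n * h / (r ^ s)) else 0

/-- The Jordan totient function `J_a(n) = n^a ∏_{p ∣ n, p prime} (1 - 1/p^a)`,
with arbitrary real exponent `a`. -/
noncomputable def jordanTotient (a : ℝ) (n : ℕ) : ℝ :=
  (n : ℝ) ^ a * ∏ p ∈ n.primeFactors, (1 - 1 / (p : ℝ) ^ a)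

/-- `tauPow k n` is the number of positive integers of the form `l ^ k` dividing `n`. -/
noncomputable def tauPow (k n : ℕ) : ℕ :=
  letI := Classical.dec
  (n.divisors.filter fun d => ∃ l : ℕ, l ^ k = d).card

/-- The Riemann zeta function of a real argument `s > 1`, as `∑_{n ≥ 1} 1/n^s`. -/
noncomputable def realZeta (s : ℝ) : ℝ := ∑' n : ℕ, 1 / (n : ℝ) ^ s

-- lcm pow dvd
lemma lcm_pow_dvd {s a b h : ℕ} (hh : h ≠ 0) (ha : a ^ s ∣ h) (hb : b ^ s ∣ h) :
    Nat.lcm a b ^ s ∣ h := by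
  rcases Nat.eq_zero_or_pos s with rfl | hs
  · simpa using ha
  have ha0 : a ≠ 0 := by rintro rfl; rw [zero_pow hs.ne', Nat.zero_dvd] at ha; exact hh ha
  have hb0 : b ≠ 0 := by rintro rfl; rw [zero_pow hs.ne', Nat.zero_dvd] at hb; exact hh hb
  have hl0 : Nat.lcm a b ≠ 0 := Nat.lcm_ne_zero ha0 hb0
  rw [← Nat.factorization_le_iff_dvd (pow_ne_zero _ hl0) hh]
  rw [← Nat.factorization_le_iff_dvd (pow_ne_zero _ ha0) hh] at ha
  rw [← Nat.factorization_le_iff_dvd (pow_ne_zero _ hb0) hh] at hb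
  intro p
  have h1 := ha p; have h2 := hb p
  simp only [Nat.factorization_pow, Finsupp.smul_apply, Nat.factorization_lcm ha0 hb0,
    Finsupp.sup_apply, smul_eq_mul] at h1 h2 ⊢
  rcases le_total (a.factorization p) (b.factorization p) with hle | hle
  · rw [max_eq_right hle]; exact h2
  · rw [max_eq_left hle]; exact h1

namespace CRproof
open ArithmeticFunction
open scoped ArithmeticFunction.Moebius

variable {s q h : ℕ}

lemma lcm_root_pow_dvd (hh : h ≠ 0) (t : Finset ℕ) (ht : ∀ d ∈ t, d ^ s ∣ h) :
    (t.lcm _root_.id) ^ s ∣ h := by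
  induction t using Finset.induction_on with
  | empty => simpa using one_dvd h
  | insert a t' hat ih =>
      rw [Finset.lcm_insert]
      exact lcm_pow_dvd hh (ht a (Finset.mem_insert_self a t'))
        (ih fun d hd => ht d (Finset.mem_insert_of_mem hd))

/-- The filtered divisor set is the divisor set of `g := lcm`. -/
lemma filter_eq_divisors_lcm (hq : q ≠ 0) (hh : h ≠ 0) :
    ∃ g : ℕ, g ≠ 0 ∧ g ∣ q ∧ g ^ s ∣ h ∧
      (q.divisors.filter fun d => d ^ s ∣ h) = g.divisors := by
  set D := q.divisors.filter fun d => d ^ s ∣ h with hD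
  set g := D.lcm _root_.id with hg
  have hgq : g ∣ q := Finset.lcm_dvd fun d hd => (Nat.mem_divisors.1 (Finset.mem_filter.1 hd).1).1
  have hgs : g ^ s ∣ h := lcm_root_pow_dvd hh D fun d hd => (Finset.mem_filter.1 hd).2
  have hg0 : g ≠ 0 := fun h0 => hq (by simpa [h0] using hgq)
  refine ⟨g, hg0, hgq, hgs, ?_⟩
  ext d
  constructor
  · intro hd
    have hd' : d ∈ D := by rw [hD]; exact hd
    exact Nat.mem_divisors.2 ⟨Finset.dvd_lcm hd', hg0⟩
  · intro hd
    have hdg : d ∣ g := (Nat.mem_divisors.1 hd).1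
    exact Finset.mem_filter.2 ⟨Nat.mem_divisors.2 ⟨hdg.trans hgq, hq⟩,
      (pow_dvd_pow_of_dvd hdg s).trans hgs⟩

lemma moebius_indicator (hs : s ≠ 0) (hq : q ≠ 0) (hh : h ≠ 0) :
    (∑ d ∈ q.divisors.filter fun d => d ^ s ∣ h, (μ d : ℂ)) =
      if genGcd s h (q ^ s) = 1 then 1 else 0 := by
  obtain ⟨g, hg0, hgq, hgs, hDg⟩ := filter_eq_divisors_lcm (s := s) hq hh
  have hz := congrArg (fun f : ArithmeticFunction ℤ => f g) moebius_mul_coe_zeta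
  simp only [coe_mul_zeta_apply, one_apply] at hz
  have hsum : (∑ d ∈ q.divisors.filter fun d => d ^ s ∣ h, (μ d : ℂ)) =
      if g = 1 then 1 else 0 := by
    rw [hDg]
    calc ∑ d ∈ g.divisors, (μ d : ℂ) = ((∑ d ∈ g.divisors, μ d : ℤ) : ℂ) := by push_cast; rfl
    _ = _ := by rw [hz]; split <;> simp
  rw [hsum]
  classical
  have hcond : (g = 1) ↔ ∀ l : ℕ, l ∣ q → l ^ s ∣ h → l = 1 := by
    constructor
    · intro h1 l hlq hls
      have hlmem : l ∈ g.divisors := by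
        rw [← hDg]; exact Finset.mem_filter.2 ⟨Nat.mem_divisors.2 ⟨hlq, hq⟩, hls⟩
      rw [h1] at hlmem
      simpa using hlmem
    · intro hc
      exact hc g hgq hgs
  have hgen : (genGcd s h (q ^ s) = 1) ↔ ∀ l : ℕ, l ∣ q → l ^ s ∣ h → l = 1 := by
    unfold genGcd
    rw [Finset.filter_congr_decidable]
    have hgcd0 : Nat.gcd h (q ^ s) ≠ 0 := fun h0 => hh (Nat.eq_zero_of_gcd_eq_zero_left h0)
    constructor
    · intro h1 l hlq hls
      have hmem : l ^ s ∈ (Nat.gcd h (q ^ s)).divisors.filter fun d => ∃ m : ℕ, m ^ s = d :=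
        Finset.mem_filter.2 ⟨Nat.mem_divisors.2 ⟨Nat.dvd_gcd hls
          (pow_dvd_pow_of_dvd hlq s), hgcd0⟩, ⟨l, rfl⟩⟩
      have hle : l ^ s ≤ 1 := h1 ▸ Finset.le_sup (f := _root_.id) hmem
      have hne : l ^ s ≠ 0 := fun h0 => by
        rw [h0] at hmem; simp [Nat.mem_divisors, hh] at hmem
      have heq : l ^ s = 1 := le_antisymm hle (Nat.one_le_iff_ne_zero.2 hne)
      exact ((pow_eq_one_iff).1 heq).resolve_right hs
    · intro hc
      apply le_antisymm
      · apply Finset.sup_le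
        intro d hd
        obtain ⟨hddvd, l, rfl⟩ := Finset.mem_filter.1 hd
        have hdvd := (Nat.mem_divisors.1 hddvd).1
        have hls : l ^ s ∣ h := (Nat.dvd_gcd_iff.1 hdvd).1
        have hlq : l ∣ q := (Nat.pow_dvd_pow_iff hs).1 (Nat.dvd_gcd_iff.1 hdvd).2
        simp [hc l hlq hls]
      · exact Finset.le_sup (f := _root_.id)
          (Finset.mem_filter.2 ⟨Nat.mem_divisors.2 ⟨one_dvd _, hgcd0⟩, ⟨1, one_pow s⟩⟩)
  rw [if_congr (hcond.trans hgen.symm) rfl rfl]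

lemma exp_sum_eq (m Q : ℕ) (hQ : 0 < Q) :
    ∑ h ∈ Finset.Icc 1 Q, Complex.exp (2 * Real.pi * Complex.I * m * h / Q)
      = if Q ∣ m then (Q : ℂ) else 0 := by
  have hQ0 : (Q : ℂ) ≠ 0 := Nat.cast_ne_zero.2 hQ.ne'
  have h2 : (2 * (Real.pi : ℂ) * Complex.I) ≠ 0 :=
    mul_ne_zero (mul_ne_zero two_ne_zero (by exact_mod_cast Real.pi_ne_zero)) Complex.I_ne_zero
  set x : ℂ := Complex.exp (2 * Real.pi * Complex.I * m / Q) with hx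
  have hterm : ∀ h : ℕ, Complex.exp (2 * Real.pi * Complex.I * m * h / Q) = x ^ h := by
    intro h
    rw [hx, ← Complex.exp_nat_mul]
    congr 1
    ring
  have hxQ : x ^ Q = 1 := by
    rw [hx, ← Complex.exp_nat_mul]
    have : (Q : ℂ) * (2 * Real.pi * Complex.I * m / Q) = m * (2 * Real.pi * Complex.I) := by
      field_simp
    rw [this]
    simpa using Complex.exp_int_mul_two_pi_mul_I (m : ℤ)
  have key : x = 1 ↔ Q ∣ m := by
    rw [hx, Complex.exp_eq_one_iff]
    constructor
    · rintro ⟨k, hk⟩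
      have hm : (m : ℂ) = (k : ℂ) * Q := by
        apply mul_left_cancel₀ h2
        field_simp at hk
        linear_combination (2 * (Real.pi : ℂ) * Complex.I) * hk
      have : (Q : ℤ) ∣ (m : ℤ) := ⟨k, by exact_mod_cast (by rw [hm]; ring : (m:ℂ) = (Q:ℂ) * k)⟩
      exact_mod_cast this
    · rintro ⟨c, rfl⟩
      exact ⟨c, by push_cast; field_simp⟩
  simp only [hterm]
  by_cases hx1 : x = 1
  · rw [if_pos (key.1 hx1)]
    simp [hx1, Nat.card_Icc]
  · rw [if_neg fun hdvd => hx1 (key.2 hdvd)]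
    have hIcc : Finset.Icc 1 Q = Finset.Ico 1 (Q + 1) := by
      ext x; simp only [Finset.mem_Icc, Finset.mem_Ico]; omega
    rw [hIcc, Finset.sum_Ico_eq_sum_range]
    have : ∀ i ∈ Finset.range (Q + 1 - 1), x ^ (1 + i) = x * x ^ i := fun i _ => by ring
    rw [Finset.sum_congr rfl this, ← Finset.mul_sum, geom_sum_eq hx1]
    simp [hxQ]

lemma cohenRamanujanSum_eq (s q m : ℕ) (hs : 0 < s) (hq : 0 < q) :
    cohenRamanujanSum s q m =
      ∑ d ∈ q.divisors, (μ d : ℂ) *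
        (if (q / d) ^ s ∣ m then (((q / d) ^ s : ℕ) : ℂ) else 0) := by
  classical
  have hq0 : q ≠ 0 := hq.ne'
  have hQ : 0 < q ^ s := pow_pos hq s
  rw [cohenRamanujanSum]
  set e : ℕ → ℂ := fun h => Complex.exp (2 * Real.pi * Complex.I * m * h / ((q : ℂ) ^ s))
    with he
  have step1 : ∀ h ∈ Finset.Icc 1 (q ^ s),
      (if genGcd s h (q ^ s) = 1 then e h else 0)
        = ∑ d ∈ q.divisors, (if d ^ s ∣ h then (μ d : ℂ) * e h else 0) := by
    intro h hh
    have hh1 : h ≠ 0 := by have := (Finset.mem_Icc.1 hh).1; omega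
    have : (if genGcd s h (q ^ s) = 1 then e h else 0)
        = (if genGcd s h (q ^ s) = 1 then (1 : ℂ) else 0) * e h := by split <;> simp
    rw [this, ← moebius_indicator hs.ne' hq0 hh1, Finset.sum_mul, Finset.sum_filter]
  calc ∑ h ∈ Finset.Icc 1 (q ^ s), (if genGcd s h (q ^ s) = 1 then e h else 0)
      = ∑ h ∈ Finset.Icc 1 (q ^ s), ∑ d ∈ q.divisors,
          (if d ^ s ∣ h then (μ d : ℂ) * e h else 0) := Finset.sum_congr rfl step1
    _ = ∑ d ∈ q.divisors, ∑ h ∈ Finset.Icc 1 (q ^ s),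
          (if d ^ s ∣ h then (μ d : ℂ) * e h else 0) := Finset.sum_comm
    _ = ∑ d ∈ q.divisors, (μ d : ℂ) *
          (if (q / d) ^ s ∣ m then (((q / d) ^ s : ℕ) : ℂ) else 0) := by
        refine Finset.sum_congr rfl fun d hd => ?_
        obtain ⟨hdq, -⟩ := Nat.mem_divisors.1 hd
        have hd0 : d ≠ 0 := fun h0 => hq0 (by simpa [h0] using (Nat.zero_dvd).1 (h0 ▸ hdq))
        have hqd0 : q / d ≠ 0 := Nat.div_ne_zero_iff.2 ⟨hd0, Nat.le_of_dvd hq hdq⟩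
        have hmul : (q / d) ^ s * d ^ s = q ^ s := by
          rw [← mul_pow, Nat.div_mul_cancel hdq]
        rw [← Finset.sum_filter, ← Finset.mul_sum]
        congr 1
        rw [← exp_sum_eq m ((q / d) ^ s) (pow_pos (Nat.pos_of_ne_zero hqd0) s)]
        have hds0 : (0:ℕ) < d ^ s := pow_pos (Nat.pos_of_ne_zero hd0) s
        have hcast : (((q / d : ℕ)) : ℂ) ^ s * ((d:ℂ)) ^ s = (q:ℂ) ^ s := by
          exact_mod_cast congrArg (Nat.cast : ℕ → ℂ) hmul
        have hqds : (((q / d : ℕ)) : ℂ) ^ s ≠ 0 :=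
          pow_ne_zero _ (Nat.cast_ne_zero.2 hqd0)
        have hdsc : ((d : ℂ)) ^ s ≠ 0 := pow_ne_zero _ (Nat.cast_ne_zero.2 hd0)
        refine Finset.sum_nbij' (fun h => h / d ^ s) (fun j => d ^ s * j) ?_ ?_ ?_ ?_ ?_
        · intro h hh
          obtain ⟨hhIcc, hdvd⟩ := Finset.mem_filter.1 hh
          obtain ⟨h1, h2⟩ := Finset.mem_Icc.1 hhIcc
          obtain ⟨c, rfl⟩ := hdvd
          show d ^ s * c / d ^ s ∈ _
          rw [Nat.mul_div_cancel_left _ hds0]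
          refine Finset.mem_Icc.2 ⟨Nat.one_le_iff_ne_zero.2 (by rintro rfl; simp at h1), ?_⟩
          have : d ^ s * c ≤ (q / d) ^ s * d ^ s := hmul ▸ h2
          rw [mul_comm ((q / d) ^ s) (d ^ s)] at this
          exact Nat.le_of_mul_le_mul_left this hds0
        · intro j hj
          obtain ⟨hj1, hj2⟩ := Finset.mem_Icc.1 hj
          refine Finset.mem_filter.2 ⟨Finset.mem_Icc.2 ⟨?_, ?_⟩, Dvd.intro _ rfl⟩
          · exact Nat.one_le_iff_ne_zero.2 (Nat.mul_ne_zero hds0.ne' (by omega))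
          · calc d ^ s * j ≤ d ^ s * (q / d) ^ s := Nat.mul_le_mul_left _ hj2
              _ = q ^ s := by rw [mul_comm]; exact hmul
        · intro h hh
          exact Nat.mul_div_cancel' (Finset.mem_filter.1 hh).2
        · intro j hj
          show d ^ s * j / d ^ s = j
          exact Nat.mul_div_cancel_left _ hds0
        · intro h hh
          obtain ⟨hhIcc, hdvd⟩ := Finset.mem_filter.1 hh
          obtain ⟨c, rfl⟩ := hdvd
          show e (d ^ s * c) = _
          rw [he]
          simp only []
          rw [Nat.mul_div_cancel_left _ hds0]
          congr 1
          push_cast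
          field_simp
          ring_nf
          rw [← hcast]; ring

/-! ### Jordan totient -/

noncomputable def J' (A : ℕ) (n : ℕ) : ℝ :=
  (n : ℝ) ^ A * ∏ p ∈ n.primeFactors, (1 - 1 / (p : ℝ) ^ A)

lemma jordanTotient_eq_J' (A n : ℕ) : jordanTotient (A : ℝ) n = J' A n := by
  rw [jordanTotient, J', Real.rpow_natCast]
  congr 1
  exact Finset.prod_congr rfl fun p _ => by rw [Real.rpow_natCast]

lemma J'_one (A : ℕ) : J' A 1 = 1 := by simp [J']

lemma J'_zero (A : ℕ) (hA : A ≠ 0) : J' A 0 = 0 := by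
  simp [J', zero_pow hA]

lemma J'_mul {A m n : ℕ} (hmn : Nat.Coprime m n) (hm : m ≠ 0) (hn : n ≠ 0) :
    J' A (m * n) = J' A m * J' A n := by
  rw [J', J', J', Nat.Coprime.primeFactors_mul hmn,
    Finset.prod_union (Nat.Coprime.disjoint_primeFactors hmn)]
  push_cast
  ring

lemma J'_prime {A p : ℕ} (hp : p.Prime) : J' A p = (p : ℝ) ^ A - 1 := by
  rw [J', hp.primeFactors]
  have hp0 : ((p : ℝ)) ^ A ≠ 0 := pow_ne_zero _ (Nat.cast_ne_zero.2 hp.pos.ne')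
  rw [Finset.prod_singleton, mul_sub, mul_one, mul_one_div_cancel hp0]

lemma J'_pos {A n : ℕ} (hA : A ≠ 0) (hn : n ≠ 0) : 0 < J' A n := by
  rw [J']
  apply mul_pos (by positivity)
  apply Finset.prod_pos
  intro p hp
  have hp2 : 2 ≤ p := (Nat.prime_of_mem_primeFactors hp).two_le
  have : (1 : ℝ) < (p : ℝ) ^ A := by
    apply one_lt_pow₀ (by exact_mod_cast hp2) hA
  have h0 : (0:ℝ) < (p:ℝ)^A := by positivity
  rw [sub_pos, div_lt_one h0]
  exact this

lemma prod_Icc_one_sub (n : ℕ) (hn : 1 ≤ n) :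
    ∏ j ∈ Finset.Icc 2 n, (1 - 1 / (j : ℝ) ^ 2) = ((n : ℝ) + 1) / (2 * (n : ℝ)) := by
  induction n, hn using Nat.le_induction with
  | base =>
      rw [show Finset.Icc 2 1 = ∅ from Finset.Icc_eq_empty (by omega), Finset.prod_empty]
      norm_num
  | succ n hn ih =>
      rw [Finset.prod_Icc_succ_top (by omega), ih]
      have h2 : (n : ℝ) ≠ 0 := by exact_mod_cast Nat.one_le_iff_ne_zero.1 hn
      have h1 : ((n : ℝ) + 1) ≠ 0 := by positivity
      push_cast
      field_simp
      ring

lemma one_sub_inv_sq_nonneg {p : ℕ} (hp : 2 ≤ p) : (0:ℝ) ≤ 1 - 1 / (p:ℝ) ^ 2 := by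
  have hpp : (2:ℝ) ≤ (p:ℝ) := by exact_mod_cast hp
  have h1 : (1:ℝ) ≤ (p:ℝ) ^ 2 := by nlinarith
  have h0 : (0:ℝ) < (p:ℝ) ^ 2 := by positivity
  rw [sub_nonneg, div_le_one h0]
  exact h1

lemma J'_lower {A n : ℕ} (hA : 2 ≤ A) (hn : n ≠ 0) :
    (n : ℝ) ^ 2 / 2 ≤ J' A n := by
  have hn1 : 1 ≤ n := Nat.one_le_iff_ne_zero.2 hn
  have hsub : n.primeFactors ⊆ Finset.Icc 2 n := by
    intro p hp
    have h1 := (Nat.prime_of_mem_primeFactors hp).two_le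
    have h2 := Nat.le_of_dvd (Nat.pos_of_ne_zero hn) (Nat.dvd_of_mem_primeFactors hp)
    exact Finset.mem_Icc.2 ⟨h1, h2⟩
  have step1 : (1:ℝ)/2 ≤ ∏ j ∈ Finset.Icc 2 n, (1 - 1 / (j : ℝ) ^ 2) := by
    rw [prod_Icc_one_sub n hn1]
    rw [div_le_div_iff₀ (by norm_num) (by positivity)]
    have : (1:ℝ) ≤ (n:ℝ) := by exact_mod_cast hn1
    nlinarith
  have step2 : ∏ j ∈ Finset.Icc 2 n, (1 - 1 / (j : ℝ) ^ 2)
      ≤ ∏ p ∈ n.primeFactors, (1 - 1 / (p : ℝ) ^ 2) := by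
    rw [← Finset.prod_sdiff hsub]
    have hle1 : ∏ j ∈ Finset.Icc 2 n \ n.primeFactors, (1 - 1 / (j : ℝ) ^ 2) ≤ 1 := by
      apply Finset.prod_le_one
      · intro j hj
        have := (Finset.mem_Icc.1 (Finset.mem_sdiff.1 hj).1).1
        exact one_sub_inv_sq_nonneg this
      · intro j hj
        have h0 : (0:ℝ) ≤ 1 / (j:ℝ)^2 := by positivity
        linarith
    have hge0 : (0:ℝ) ≤ ∏ p ∈ n.primeFactors, (1 - 1 / (p : ℝ) ^ 2) :=
      Finset.prod_nonneg fun p hp =>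
        one_sub_inv_sq_nonneg (Nat.prime_of_mem_primeFactors hp).two_le
    exact mul_le_of_le_one_left hge0 hle1
  have step3 : ∏ p ∈ n.primeFactors, (1 - 1 / (p : ℝ) ^ 2)
      ≤ ∏ p ∈ n.primeFactors, (1 - 1 / (p : ℝ) ^ A) := by
    apply Finset.prod_le_prod
    · intro p hp
      exact one_sub_inv_sq_nonneg (Nat.prime_of_mem_primeFactors hp).two_le
    · intro p hp
      have hp1 : (1:ℝ) ≤ (p:ℝ) := by
        exact_mod_cast (Nat.prime_of_mem_primeFactors hp).one_lt.le
      have hple : (p:ℝ)^2 ≤ (p:ℝ)^A := pow_le_pow_right₀ hp1 hA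
      have h20 : (0:ℝ) < (p:ℝ)^2 := by positivity
      have := one_div_le_one_div_of_le h20 hple
      linarith
  have hPA : (1:ℝ)/2 ≤ ∏ p ∈ n.primeFactors, (1 - 1 / (p : ℝ) ^ A) :=
    le_trans (le_trans step1 step2) step3
  have hn1' : (1:ℝ) ≤ (n:ℝ) := by exact_mod_cast hn1
  have hpow : (n:ℝ)^2 ≤ (n:ℝ)^A := pow_le_pow_right₀ hn1' hA
  have : (n:ℝ)^2 * (1/2) ≤ (n:ℝ)^A * ∏ p ∈ n.primeFactors, (1 - 1 / (p : ℝ) ^ A) :=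
    mul_le_mul hpow hPA (by norm_num) (by positivity)
  rw [J']
  linarith

/-! ### The summand as a multiplicative function -/

noncomputable def powDvd (s n : ℕ) : ArithmeticFunction ℂ :=
  ⟨fun d => if d ∣ n ∧ 0 < n then (d : ℂ) ^ s else 0, by
    show (if (0:ℕ) ∣ n ∧ 0 < n then ((0:ℕ) : ℂ) ^ s else 0) = 0
    rw [if_neg]
    rintro ⟨h1, h2⟩; rw [Nat.zero_dvd] at h1; omega⟩

lemma powDvd_apply (s n d : ℕ) :
    powDvd s n d = if d ∣ n ∧ 0 < n then (d : ℂ) ^ s else 0 := rfl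

lemma powDvd_mult {s n : ℕ} (hn : 0 < n) : (powDvd s n).IsMultiplicative := by
  constructor
  · simp [powDvd_apply, hn]
  · intro m m' hcop
    rw [powDvd_apply, powDvd_apply, powDvd_apply]
    by_cases h1 : m ∣ n <;> by_cases h2 : m' ∣ n
    · rw [if_pos ⟨Nat.Coprime.mul_dvd_of_dvd_of_dvd hcop h1 h2, hn⟩, if_pos ⟨h1, hn⟩,
        if_pos ⟨h2, hn⟩]
      push_cast
      ring
    · rw [if_neg (fun hc : m * m' ∣ n ∧ 0 < n => h2 ((dvd_mul_left m' m).trans hc.1)),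
        if_neg (fun hc : m' ∣ n ∧ 0 < n => h2 hc.1), mul_zero]
    · rw [if_neg (fun hc : m * m' ∣ n ∧ 0 < n => h1 ((dvd_mul_right m m').trans hc.1)),
        if_neg (fun hc : m ∣ n ∧ 0 < n => h1 hc.1), zero_mul]
    · rw [if_neg (fun hc : m * m' ∣ n ∧ 0 < n => h1 ((dvd_mul_right m m').trans hc.1)),
        if_neg (fun hc : m ∣ n ∧ 0 < n => h1 hc.1), zero_mul]

noncomputable def cFun (s n : ℕ) : ArithmeticFunction ℂ :=
  ((μ : ArithmeticFunction ℤ) : ArithmeticFunction ℂ) * powDvd s n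

lemma cFun_mult {s n : ℕ} (hn : 0 < n) : (cFun s n).IsMultiplicative :=
  (isMultiplicative_moebius.intCast).mul (powDvd_mult hn)

lemma cohen_eq_cFun {s n : ℕ} (q : ℕ) (hs : 0 < s) (hn : 0 < n) (hq : 0 < q) :
    cohenRamanujanSum s q (n ^ s) = cFun s n q := by
  have hconv : (cFun s n) q = ∑ d ∈ q.divisors,
      (((μ : ArithmeticFunction ℤ) : ArithmeticFunction ℂ)) d * powDvd s n (q / d) := by
    rw [cFun, ArithmeticFunction.mul_apply]
    exact Nat.sum_divisorsAntidiagonal (fun a b =>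
      (((μ : ArithmeticFunction ℤ) : ArithmeticFunction ℂ)) a * powDvd s n b)
  rw [cohenRamanujanSum_eq s q (n ^ s) hs hq, hconv]
  refine Finset.sum_congr rfl fun d hd => ?_
  rw [powDvd_apply, ArithmeticFunction.intCoe_apply]
  congr 1
  have : (q / d) ^ s ∣ n ^ s ↔ (q / d) ∣ n := Nat.pow_dvd_pow_iff hs.ne'
  by_cases hdn : (q / d) ∣ n
  · rw [if_pos (this.2 hdn), if_pos ⟨hdn, hn⟩]
    push_cast
    ring
  · rw [if_neg (fun hc => hdn (this.1 hc)), if_neg (fun hc => hdn hc.1)]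

lemma norm_moebius_le_one (q : ℕ) : ‖((μ q : ℤ) : ℂ)‖ ≤ 1 := by
  by_cases hq : Squarefree q
  · rw [Complex.norm_intCast]
    rw [show |((μ q : ℤ) : ℝ)| = |(μ q : ℝ)| from rfl]
    have := abs_moebius_eq_one_of_squarefree hq
    have : |((μ q : ℤ) : ℝ)| = 1 := by exact_mod_cast congrArg (Int.cast : ℤ → ℝ) this
    rw [this]
  · rw [moebius_eq_zero_of_not_squarefree hq]
    simp

lemma cohen_norm_le {s n : ℕ} (q : ℕ) (hs : 0 < s) (hn : 0 < n) (hq : 0 < q) :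
    ‖cohenRamanujanSum s q (n ^ s)‖ ≤ (n : ℝ) ^ (s + 1) := by
  classical
  rw [cohenRamanujanSum_eq s q (n ^ s) hs hq]
  refine le_trans (norm_sum_le _ _) ?_
  have hterm : ∀ d ∈ q.divisors,
      ‖(μ d : ℂ) * (if (q / d) ^ s ∣ n ^ s then (((q / d) ^ s : ℕ) : ℂ) else 0)‖
        ≤ (if (q / d) ∣ n then ((n : ℝ)) ^ s else 0) := by
    intro d hd
    rw [norm_mul]
    by_cases hdn : (q / d) ∣ n
    · rw [if_pos ((Nat.pow_dvd_pow_iff hs.ne').2 hdn), if_pos hdn]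
      have h1 : ‖(((q / d) ^ s : ℕ) : ℂ)‖ = ((q / d : ℕ) : ℝ) ^ s := by
        rw [Complex.norm_natCast]; push_cast; ring
      rw [h1]
      have h2 : ((q / d : ℕ) : ℝ) ^ s ≤ (n : ℝ) ^ s := by
        apply pow_le_pow_left₀ (by positivity)
        exact_mod_cast Nat.le_of_dvd hn hdn
      calc ‖(μ d : ℂ)‖ * ((q / d : ℕ) : ℝ) ^ s ≤ 1 * ((q / d : ℕ) : ℝ) ^ s :=
            mul_le_mul_of_nonneg_right (norm_moebius_le_one d) (by positivity)
        _ = ((q / d : ℕ) : ℝ) ^ s := one_mul _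
        _ ≤ (n : ℝ) ^ s := h2
    · rw [if_neg (fun hc => hdn ((Nat.pow_dvd_pow_iff hs.ne').1 hc)), if_neg hdn]
      simp
  refine le_trans (Finset.sum_le_sum hterm) ?_
  rw [← Finset.sum_filter]
  have hcard : (q.divisors.filter fun d => (q / d) ∣ n).card ≤ n := by
    have hinj : ∀ d ∈ q.divisors.filter fun d => (q / d) ∣ n, q / d ∈ n.divisors := by
      intro d hd
      obtain ⟨hd1, hd2⟩ := Finset.mem_filter.1 hd
      exact Nat.mem_divisors.2 ⟨hd2, hn.ne'⟩
    have hcle : (q.divisors.filter fun d => (q / d) ∣ n).card ≤ n.divisors.card := by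
      apply Finset.card_le_card_of_injOn (fun d => q / d) hinj
      intro d1 h1 d2 h2 heq
      have hq1 : d1 ∣ q := (Nat.mem_divisors.1 (Finset.mem_filter.1 h1).1).1
      have hq2 : d2 ∣ q := (Nat.mem_divisors.1 (Finset.mem_filter.1 h2).1).1
      have e1 : q / (q / d1) = d1 := Nat.div_div_self hq1 hq.ne'
      have e2 : q / (q / d2) = d2 := Nat.div_div_self hq2 hq.ne'
      have heq' : q / d1 = q / d2 := heq
      rw [← e1, ← e2, heq']
    refine hcle.trans ?_
    have : n.divisors ⊆ Finset.Icc 1 n := fun d hd => Finset.mem_Icc.2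
      ⟨(Nat.one_le_iff_ne_zero.2 (Nat.pos_of_mem_divisors hd).ne'),
        Nat.le_of_dvd hn (Nat.mem_divisors.1 hd).1⟩
    calc n.divisors.card ≤ (Finset.Icc 1 n).card := Finset.card_le_card this
      _ = n := by rw [Nat.card_Icc]; omega
  calc ∑ _d ∈ q.divisors.filter fun d => (q / d) ∣ n, (n : ℝ) ^ s
      = (q.divisors.filter fun d => (q / d) ∣ n).card * (n : ℝ) ^ s := by
        rw [Finset.sum_const, nsmul_eq_mul]
    _ ≤ (n : ℝ) * (n : ℝ) ^ s := by
        apply mul_le_mul_of_nonneg_right _ (by positivity)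
        exact_mod_cast hcard
    _ = (n : ℝ) ^ (s + 1) := by ring

lemma cohen_prime {s n p : ℕ} (hs : 0 < s) (hn : 0 < n) (hp : p.Prime) :
    cohenRamanujanSum s p (n ^ s) = (if p ∣ n then ((p : ℂ)) ^ s else 0) - 1 := by
  classical
  rw [cohenRamanujanSum_eq s p (n ^ s) hs hp.pos, Nat.Prime.divisors hp,
    Finset.sum_pair hp.one_lt.ne]
  rw [Nat.div_one, Nat.div_self hp.pos]
  rw [ArithmeticFunction.moebius_apply_one]
  rw [moebius_apply_prime hp]
  have h1 : (1 : ℕ) ^ s ∣ n ^ s := by simp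
  rw [if_pos h1]
  have hiff : p ^ s ∣ n ^ s ↔ p ∣ n := Nat.pow_dvd_pow_iff hs.ne'
  by_cases hpn : p ∣ n
  · rw [if_pos (hiff.2 hpn), if_pos hpn]
    push_cast
    ring
  · rw [if_neg (fun hc => hpn (hiff.1 hc)), if_neg hpn]
    push_cast
    ring

lemma one_add_F_eq {s k n p : ℕ} (hs : 0 < s) (hk : 0 < k) (hn : 0 < n) (hp : p.Prime) :
    1 + (μ p : ℂ) * cohenRamanujanSum s p (n ^ s) / ((J' (s + k) p : ℝ) : ℂ)
      = (1 - ((p : ℂ) ^ (s + k))⁻¹)⁻¹ * (if p ∣ n then 1 - 1 / (p : ℂ) ^ k else 1) := by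
  have hp0 : (p : ℂ) ≠ 0 := Nat.cast_ne_zero.2 hp.pos.ne'
  have hPa1 : (p : ℂ) ^ (s + k) ≠ 1 := by
    have h1 : (1 : ℕ) < p ^ (s + k) := Nat.one_lt_pow (by omega) hp.one_lt
    intro hc
    have : ((p ^ (s + k) : ℕ) : ℂ) = ((1 : ℕ) : ℂ) := by push_cast; exact hc
    exact h1.ne' (Nat.cast_injective this)
  have hPa0 : (p : ℂ) ^ (s + k) ≠ 0 := pow_ne_zero _ hp0
  have hJ : ((J' (s + k) p : ℝ) : ℂ) = (p : ℂ) ^ (s + k) - 1 := by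
    rw [J'_prime hp]; push_cast; ring
  have hm : (μ p : ℂ) = -1 := by
    have := moebius_apply_prime hp
    exact_mod_cast congrArg (Int.cast : ℤ → ℂ) this
  rw [cohen_prime hs hn hp, hm, hJ]
  have hsub : (p : ℂ) ^ (s + k) - 1 ≠ 0 := sub_ne_zero.2 hPa1
  have hinv : 1 - ((p : ℂ) ^ (s + k))⁻¹ ≠ 0 := by
    rw [sub_ne_zero]
    intro hc
    exact hPa1 (by rw [← inv_inv ((p:ℂ) ^ (s+k)), ← hc, inv_one])
  have hpk : (p : ℂ) ^ k ≠ 0 := pow_ne_zero _ hp0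
  by_cases hpn : p ∣ n
  · rw [if_pos hpn, if_pos hpn, pow_add] at *
    field_simp
    ring
  · rw [if_neg hpn, if_neg hpn]
    field_simp
    ring

end CRproof

open scoped ArithmeticFunction.Moebius

open CRproof ArithmeticFunction in
/-- For all positive integers `s, k, n`, the series
`∑_{q ≥ 1} μ(q) c_q^s(n^s) / J_{s+k}(q)` converges to `ζ(s+k) · J_k(n)/n^k`. -/
theorem cohenRamanujan_expansion_jordan (s k n : ℕ) (hs : 0 < s) (hk : 0 < k) (hn : 0 < n) :
    Filter.Tendsto
      (fun N : ℕ => ∑ q ∈ Finset.Icc 1 N,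
        (ArithmeticFunction.moebius q : ℂ) * cohenRamanujanSum s q (n ^ s) /
          ((jordanTotient ((s : ℝ) + (k : ℝ)) q : ℝ) : ℂ))
      Filter.atTop
      (nhds (riemannZeta ((s : ℂ) + (k : ℂ)) *
        ((jordanTotient (k : ℝ) n / (n : ℝ) ^ (k : ℝ) : ℝ) : ℂ))) := by
  classical
  have hA2 : 2 ≤ s + k := by omega
  have hA0 : s + k ≠ 0 := by omega
  have hrealcast : ((s : ℝ) + (k : ℝ)) = ((s + k : ℕ) : ℝ) := by push_cast; ring
  set F : ℕ → ℂ := fun q => (ArithmeticFunction.moebius q : ℂ) * cohenRamanujanSum s q (n ^ s) /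
      ((jordanTotient ((s : ℝ) + (k : ℝ)) q : ℝ) : ℂ) with hFdef
  have hJf : ∀ q : ℕ, ((jordanTotient ((s : ℝ) + (k : ℝ)) q : ℝ) : ℂ)
      = ((J' (s + k) q : ℝ) : ℂ) := fun q => by rw [hrealcast, jordanTotient_eq_J']
  have hFeq : ∀ q : ℕ, F q = (μ q : ℂ) * cohenRamanujanSum s q (n ^ s) /
      ((J' (s + k) q : ℝ) : ℂ) := fun q => by simp only [hFdef]; rw [hJf q]
  have hF0 : F 0 = 0 := by rw [hFeq]; simp
  have hJne : ∀ q : ℕ, q ≠ 0 → ((J' (s + k) q : ℝ) : ℂ) ≠ 0 := fun q hq => by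
    exact_mod_cast (J'_pos hA0 hq).ne'
  have hC1 : cohenRamanujanSum s 1 (n ^ s) = 1 := by
    rw [cohen_eq_cFun 1 hs hn one_pos, (cFun_mult hn).map_one]
  have hF1 : F 1 = 1 := by
    rw [hFeq, hC1, J'_one]
    simp
  have hmulF : ∀ {a b : ℕ}, Nat.Coprime a b → F (a * b) = F a * F b := by
    intro a b hab
    rcases eq_or_ne a 0 with rfl | ha0
    · rw [zero_mul, hF0, zero_mul]
    rcases eq_or_ne b 0 with rfl | hb0
    · rw [mul_zero, hF0, mul_zero]
    rw [hFeq, hFeq, hFeq]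
    rw [cohen_eq_cFun (a * b) hs hn (by positivity), cohen_eq_cFun a hs hn (Nat.pos_of_ne_zero ha0),
      cohen_eq_cFun b hs hn (Nat.pos_of_ne_zero hb0)]
    rw [(cFun_mult hn).map_mul_of_coprime hab]
    have hmu : ((μ (a * b) : ℤ) : ℂ) = (μ a : ℂ) * (μ b : ℂ) := by
      have := isMultiplicative_moebius.map_mul_of_coprime hab
      exact_mod_cast congrArg (Int.cast : ℤ → ℂ) this
    rw [hmu, J'_mul hab ha0 hb0]
    push_cast
    have h1 : ((J' (s + k) a : ℝ) : ℂ) ≠ 0 := hJne a ha0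
    have h2 : ((J' (s + k) b : ℝ) : ℂ) ≠ 0 := hJne b hb0
    field_simp
  have hnorm : ∀ q : ℕ, ‖F q‖ ≤ 2 * (n : ℝ) ^ (s + 1) * ((q : ℝ) ^ 2)⁻¹ := by
    intro q
    rcases eq_or_ne q 0 with rfl | hq0
    · rw [hF0]; simp
    have hqpos : 0 < q := Nat.pos_of_ne_zero hq0
    rw [hFeq, norm_div, norm_mul]
    have hJnorm : ‖((J' (s + k) q : ℝ) : ℂ)‖ = J' (s + k) q := by
      rw [Complex.norm_real, Real.norm_eq_abs, abs_of_pos (J'_pos hA0 hq0)]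
    rw [hJnorm]
    have hq2 : (0:ℝ) < (q:ℝ)^2 / 2 := by positivity
    have hcn := cohen_norm_le q hs hn hqpos
    have hmn := norm_moebius_le_one q
    have hnum : ‖((μ q : ℤ) : ℂ)‖ * ‖cohenRamanujanSum s q (n ^ s)‖ ≤ (n:ℝ)^(s+1) := by
      calc ‖((μ q : ℤ) : ℂ)‖ * ‖cohenRamanujanSum s q (n ^ s)‖
          ≤ 1 * (n:ℝ)^(s+1) := mul_le_mul hmn hcn (norm_nonneg _) one_pos.le
        _ = (n:ℝ)^(s+1) := one_mul _
    calc ‖((μ q : ℤ) : ℂ)‖ * ‖cohenRamanujanSum s q (n ^ s)‖ / J' (s + k) q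
        ≤ (n:ℝ)^(s+1) / ((q:ℝ)^2 / 2) :=
          div_le_div₀ (by positivity) hnum hq2 (J'_lower hA2 hq0)
      _ = 2 * (n : ℝ) ^ (s + 1) * ((q : ℝ) ^ 2)⁻¹ := by
          rw [div_div_eq_mul_div, div_eq_mul_inv]
          ring
  have hsummable : Summable (fun q => ‖F q‖) := by
    apply Summable.of_nonneg_of_le (fun q => norm_nonneg _) hnorm
    have h2 : Summable (fun q : ℕ => 1 / (q:ℝ)^2) := by
      rw [Real.summable_one_div_nat_pow]
      omega
    have h3 := h2.mul_left (2 * (n : ℝ) ^ (s + 1))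
    refine h3.congr fun q => ?_
    rw [one_div]
  have heuler := EulerProduct.eulerProduct_hasProd hF1 hmulF hsummable hF0
  have htsum : ∀ p : Nat.Primes, (∑' e : ℕ, F ((p : ℕ) ^ e)) = 1 + F (p : ℕ) := by
    intro p
    have hzero : ∀ e ∉ ({0, 1} : Finset ℕ), F ((p : ℕ) ^ e) = 0 := by
      intro e he
      simp only [Finset.mem_insert, Finset.mem_singleton] at he
      push_neg at he
      have hmu0 : μ ((p : ℕ) ^ e) = 0 := by
        rw [moebius_apply_prime_pow p.prop he.1]
        exact if_neg he.2
      rw [hFeq, hmu0]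
      simp
    rw [tsum_eq_sum hzero, Finset.sum_pair (by norm_num : (0:ℕ) ≠ 1)]
    rw [pow_zero, pow_one, hF1]
  have hre : 1 < ((s : ℂ) + (k : ℂ)).re := by
    simp only [Complex.add_re, Complex.natCast_re]
    exact_mod_cast (by omega : 1 < s + k)
  have hzeta := riemannZeta_eulerProduct_hasProd hre
  set w : Nat.Primes → ℂ := fun p => if (p : ℕ) ∣ n then 1 - 1 / ((p : ℕ) : ℂ) ^ k else 1
    with hwdef
  have hcpow : ∀ p : Nat.Primes, ((p : ℕ) : ℂ) ^ (-((s : ℂ) + (k : ℂ)))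
      = (((p : ℕ) : ℂ) ^ (s + k))⁻¹ := by
    intro p
    rw [Complex.cpow_neg]
    congr 1
    have hnc : ((s : ℂ) + (k : ℂ)) = ((s + k : ℕ) : ℂ) := by push_cast; ring
    rw [hnc, Complex.cpow_natCast]
  have hkey : ∀ p : Nat.Primes,
      (1 - ((p : ℕ) : ℂ) ^ (-((s : ℂ) + (k : ℂ))))⁻¹ * w p = ∑' e : ℕ, F ((p : ℕ) ^ e) := by
    intro p
    rw [htsum p, hcpow p]
    simp only [hwdef]
    rw [hFeq]
    exact (one_add_F_eq hs hk hn p.prop).symm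
  have hwprod : HasProd w (∏ p ∈ (n.primeFactors.subtype Nat.Prime : Finset Nat.Primes), w p) := by
    apply hasProd_prod_of_ne_finset_one
    intro p hp
    simp only [hwdef]
    rw [if_neg]
    intro hdvd
    exact hp (Finset.mem_subtype.2 (Nat.mem_primeFactors.2 ⟨p.prop, hdvd, hn.ne'⟩))
  have hwval : (∏ p ∈ (n.primeFactors.subtype Nat.Prime : Finset Nat.Primes), w p)
      = ∏ p ∈ n.primeFactors, (1 - 1 / (p : ℂ) ^ k) := by
    simp only [hwdef]
    rw [Finset.prod_subtype_of_mem (fun m => if m ∣ n then 1 - 1 / (m : ℂ) ^ k else 1)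
      (fun x hx => Nat.prime_of_mem_primeFactors hx)]
    exact Finset.prod_congr rfl fun p hp => if_pos (Nat.dvd_of_mem_primeFactors hp)
  have hfinal := hzeta.mul hwprod
  have hfun : (fun p : Nat.Primes => (1 - ((p : ℕ) : ℂ) ^ (-((s : ℂ) + (k : ℂ))))⁻¹ * w p)
      = fun p : Nat.Primes => ∑' e : ℕ, F ((p : ℕ) ^ e) := funext fun p => hkey p
  rw [hfun] at hfinal
  have htsumval : (∑' q : ℕ, F q) = riemannZeta ((s : ℂ) + (k : ℂ)) *
      ∏ p ∈ n.primeFactors, (1 - 1 / (p : ℂ) ^ k) := by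
    rw [← hwval]
    exact heuler.unique hfinal
  have hRHS : ((jordanTotient (k : ℝ) n / (n : ℝ) ^ (k : ℝ) : ℝ) : ℂ)
      = ∏ p ∈ n.primeFactors, (1 - 1 / (p : ℂ) ^ k) := by
    rw [jordanTotient_eq_J', J', Real.rpow_natCast]
    have hn0 : ((n : ℝ)) ^ k ≠ 0 := by positivity
    rw [mul_comm, mul_div_assoc, div_self hn0, mul_one]
    push_cast
    rfl
  rw [hRHS, ← htsumval]
  have hsumF : Summable F := hsummable.of_norm
  have h1 := hsumF.hasSum.tendsto_sum_nat
  have h2 := h1.comp (tendsto_add_atTop_nat 1)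
  have hIcc : ∀ N : ℕ, Finset.Icc 1 N = (Finset.range (N + 1)).erase 0 := by
    intro N
    ext x
    simp only [Finset.mem_Icc, Finset.mem_erase, Finset.mem_range]
    omega
  refine h2.congr fun N => ?_
  show ∑ q ∈ Finset.range (N + 1), F q = ∑ q ∈ Finset.Icc 1 N, F q
  rw [hIcc N, Finset.sum_erase _ hF0]
end

section
/- For all positive integers s, k and n, the series ∑_{q=1}^∞ μ(q) c_q^s(n^s) / J_{s+k}(q) converges and equals ∏_{p | n, p prime} (1 - (p^s - 1)/(p^{s+k} - 1)) · ∏_{p ∤ n, p prime} (1 + 1/(p^{s+k} - 1)), where the second product is taken over all primes not dividing n (and converges). -/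
open Finset Filter

lemma prod_pow_dvd_iff {t : Finset ℕ} (ht : ∀ p ∈ t, Nat.Prime p) (s h : ℕ) :
    (∏ p ∈ t, p) ^ s ∣ h ↔ ∀ p ∈ t, p ^ s ∣ h := by
  induction t using Finset.induction_on with
  | empty => simp
  | @insert a t' ha ih =>
    have hap : Nat.Prime a := ht a (mem_insert_self a t')
    have ht' : ∀ p ∈ t', Nat.Prime p := fun p hp => ht p (mem_insert_of_mem hp)
    rw [Finset.prod_insert ha, mul_pow]
    have hcop : (a ^ s).Coprime ((∏ p ∈ t', p) ^ s) := by
      apply Nat.Coprime.pow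
      apply Nat.Coprime.prod_right
      intro p hp
      exact (Nat.coprime_primes hap (ht' p hp)).mpr (fun he => ha (he ▸ hp))
    constructor
    · intro hd
      have h1 : a ^ s ∣ h := (dvd_mul_right _ _).trans hd
      have h2 : (∏ p ∈ t', p) ^ s ∣ h := (dvd_mul_left _ _).trans hd
      intro p hp
      rcases mem_insert.mp hp with rfl | hp'
      · exact h1
      · exact (ih ht').mp h2 p hp'
    · intro hall
      exact hcop.mul_dvd_of_dvd_of_dvd (hall a (mem_insert_self a t'))
        ((ih ht').mpr fun p hp => hall p (mem_insert_of_mem hp))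

lemma telescope_prod : ∀ B : ℕ, 1 ≤ B →
    ∏ j ∈ Finset.Icc 2 B, (1 - 1 / (j : ℝ) ^ 2) = ((B : ℝ) + 1) / (2 * B) := by
  intro B hB
  induction B with
  | zero => omega
  | succ B ih =>
    rcases Nat.lt_or_ge 1 (B+1) with h2 | h1
    · have hB1 : 1 ≤ B := by omega
      rw [Finset.prod_Icc_succ_top (by omega), ih hB1]
      have hBR : (0:ℝ) < B := by exact_mod_cast hB1
      have h1 : ((B:ℝ) + 1) ≠ 0 := by positivity
      push_cast
      field_simp
      ring
    · have : B = 0 := by omega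
      subst this
      norm_num

lemma one_sub_mem {j : ℕ} (hj : 2 ≤ j) :
    (0:ℝ) ≤ 1 - 1 / (j : ℝ) ^ 2 ∧ (1 - 1 / (j : ℝ) ^ 2) ≤ 1 := by
  have h2 : (2:ℝ) ≤ j := by exact_mod_cast hj
  have h1 : (1:ℝ) ≤ (j:ℝ)^2 := by nlinarith
  have ha : 1 / (j:ℝ)^2 ≤ 1 := by rw [div_le_one (by linarith)]; linarith
  have hb : 0 ≤ 1 / (j:ℝ)^2 := by positivity
  exact ⟨by linarith, by linarith⟩

lemma half_le_prod_one_sub {F : Finset ℕ} (hF : ∀ j ∈ F, 2 ≤ j) :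
    (1/2 : ℝ) ≤ ∏ j ∈ F, (1 - 1 / (j : ℝ) ^ 2) := by
  have hFnn : 0 ≤ ∏ j ∈ F, (1 - 1 / (j : ℝ) ^ 2) :=
    Finset.prod_nonneg fun j hj => (one_sub_mem (hF j hj)).1
  set B := F.sup id with hBdef
  have hsub : F ⊆ Finset.Icc 2 B := fun j hj =>
    Finset.mem_Icc.mpr ⟨hF j hj, Finset.le_sup (f := id) hj⟩
  rcases Nat.lt_or_ge B 1 with hB0 | hB1
  · have hFe : F = ∅ := by
      rcases Finset.eq_empty_or_nonempty F with h | h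
      · exact h
      · obtain ⟨j, hj⟩ := h
        have := Finset.mem_Icc.mp (hsub hj)
        omega
    rw [hFe]
    norm_num
  · have hIcc : ∏ j ∈ Finset.Icc 2 B, (1 - 1 / (j : ℝ) ^ 2)
        ≤ ∏ j ∈ F, (1 - 1 / (j : ℝ) ^ 2) := by
      rw [← Finset.prod_sdiff hsub]
      have h1 : ∏ j ∈ Finset.Icc 2 B \ F, (1 - 1 / (j : ℝ) ^ 2) ≤ 1 := by
        apply Finset.prod_le_one
        · exact fun j hj => (one_sub_mem (Finset.mem_Icc.mp (Finset.mem_sdiff.mp hj).1).1).1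
        · exact fun j hj => (one_sub_mem (Finset.mem_Icc.mp (Finset.mem_sdiff.mp hj).1).1).2
      exact mul_le_of_le_one_left hFnn h1
    refine le_trans ?_ hIcc
    rw [telescope_prod B hB1]
    have hBR : (1:ℝ) ≤ B := by exact_mod_cast hB1
    rw [div_le_div_iff₀ (by norm_num) (by linarith)]
    linarith

lemma genGcd_def (s m n : ℕ) [DecidablePred fun d : ℕ => ∃ l : ℕ, l ^ s = d] :
    genGcd s m n = ((Nat.gcd m n).divisors.filter fun d => ∃ l : ℕ, l ^ s = d).sup id := by
  unfold genGcd
  congr 1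
  apply Finset.filter_congr_decidable

lemma sum_exp_Icc (M N : ℕ) (hM : 0 < M) :
    ∑ h ∈ Finset.Icc 1 M, Complex.exp (2 * Real.pi * Complex.I * N * h / M)
      = if M ∣ N then (M : ℂ) else 0 := by
  have hM0 : (M : ℂ) ≠ 0 := Nat.cast_ne_zero.mpr hM.ne'
  set z : ℂ := 2 * Real.pi * Complex.I * N / M with hz
  have hexp : ∀ h : ℕ, (2 : ℂ) * Real.pi * Complex.I * N * h / M
      = h * z := by
    intro h; rw [hz]; field_simp
  have hpow : ∀ h : ℕ, Complex.exp (2 * Real.pi * Complex.I * N * h / M)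
      = Complex.exp z ^ h := by
    intro h; rw [hexp, Complex.exp_nat_mul]
  by_cases hdvd : M ∣ N
  · obtain ⟨c, hc⟩ := hdvd
    have hz1 : Complex.exp z = 1 := by
      rw [hz, hc]
      have he : (2 : ℂ) * Real.pi * Complex.I * (↑(M * c)) / M
          = (c : ℤ) * (2 * Real.pi * Complex.I) := by
        push_cast; field_simp
      rw [he, Complex.exp_int_mul_two_pi_mul_I]
    simp only [hpow, hz1, one_pow, Finset.sum_const, Nat.card_Icc, nsmul_eq_mul, mul_one]
    rw [if_pos ⟨c, hc⟩]
    norm_num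
  · rw [if_neg hdvd]
    have hzne : Complex.exp z ≠ 1 := by
      intro he
      obtain ⟨kk, hk⟩ := Complex.exp_eq_one_iff.mp he
      rw [hz] at hk
      have h2pi : (2 : ℂ) * Real.pi * Complex.I ≠ 0 := by
        simp [Real.pi_ne_zero, Complex.I_ne_zero]
      have : (N : ℂ) = kk * M := by
        field_simp at hk
        have := hk
        -- hk : 2 * π * I * N = kk * (2 * π * I) * M  (roughly)
        apply mul_left_cancel₀ h2pi
        rw [show (2:ℂ) * Real.pi * Complex.I * (kk * M) = kk * (2 * Real.pi * Complex.I) * M by ring]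
        linear_combination (2 * (Real.pi : ℂ) * Complex.I) * hk
      have hNZ : (N : ℤ) = kk * M := by
        exact_mod_cast this
      exact hdvd (Int.natCast_dvd_natCast.mp ⟨kk, by rw [hNZ]; ring⟩)
    have hzM : Complex.exp z ^ M = 1 := by
      rw [← Complex.exp_nat_mul]
      have : (M : ℂ) * z = (N : ℤ) * (2 * Real.pi * Complex.I) := by
        rw [hz]; push_cast; field_simp
      rw [this, Complex.exp_int_mul_two_pi_mul_I]
    calc ∑ h ∈ Finset.Icc 1 M, Complex.exp (2 * Real.pi * Complex.I * N * h / M)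
        = ∑ h ∈ Finset.Ico 1 (M + 1), Complex.exp z ^ h := by
          rw [← Finset.Ico_add_one_right_eq_Icc]; exact Finset.sum_congr rfl fun h _ => hpow h
      _ = ∑ i ∈ Finset.range M, Complex.exp z ^ (1 + i) := by
          rw [Finset.sum_Ico_eq_sum_range]; norm_num
      _ = Complex.exp z * ∑ i ∈ Finset.range M, Complex.exp z ^ i := by
          rw [Finset.mul_sum]; exact Finset.sum_congr rfl fun i _ => by rw [pow_add, pow_one]
      _ = 0 := by rw [geom_sum_eq hzne, hzM]; simp

lemma genGcd_eq_one_iff {s q : ℕ} (hs : 0 < s) (hq : 0 < q) {h : ℕ} (hh : 0 < h) :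
    genGcd s h (q ^ s) = 1 ↔ ∀ p ∈ q.primeFactors, ¬ p ^ s ∣ h := by
  have hgcd : Nat.gcd h (q ^ s) ≠ 0 := (Nat.gcd_pos_of_pos_left _ hh).ne'
  classical
  rw [genGcd_def]
  constructor
  · intro h1 p hp hpd
    have hp' : Nat.Prime p := Nat.prime_of_mem_primeFactors hp
    have hpq : p ∣ q := Nat.dvd_of_mem_primeFactors hp
    have hmem : p ^ s ∈ (Nat.gcd h (q ^ s)).divisors.filter (fun d => ∃ l : ℕ, l ^ s = d) := by
      rw [Finset.mem_filter, Nat.mem_divisors]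
      exact ⟨⟨Nat.dvd_gcd hpd (pow_dvd_pow_of_dvd hpq s), hgcd⟩, ⟨p, rfl⟩⟩
    have hle := Finset.le_sup (f := id) hmem
    rw [h1] at hle
    have : 2 ≤ p ^ s := le_trans hp'.two_le (Nat.le_self_pow hs.ne' p)
    simp only [id_eq] at hle
    omega
  · intro hall
    apply le_antisymm
    · apply Finset.sup_le
      intro d hd
      rw [Finset.mem_filter, Nat.mem_divisors] at hd
      obtain ⟨⟨hdvd, _⟩, l, rfl⟩ := hd
      by_contra hgt
      simp only [id_eq] at hgt
      push_neg at hgt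
      have hl0 : l ≠ 0 := by
        rintro rfl
        rw [zero_pow hs.ne'] at hdvd
        exact hgcd (Nat.eq_zero_of_zero_dvd hdvd)
      have hl1 : l ≠ 1 := by rintro rfl; simp at hgt
      obtain ⟨p, hp, hpl⟩ := Nat.exists_prime_and_dvd hl1
      have hps : p ^ s ∣ l ^ s := pow_dvd_pow_of_dvd hpl s
      have h1 : p ^ s ∣ h := hps.trans (hdvd.trans (Nat.gcd_dvd_left _ _))
      have h2 : p ∣ q := by
        have hpq : p ∣ q ^ s :=
          dvd_trans (dvd_pow_self p hs.ne') (hps.trans (hdvd.trans (Nat.gcd_dvd_right _ _)))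
        exact hp.dvd_of_dvd_pow hpq
      exact hall p (Nat.mem_primeFactors.mpr ⟨hp, h2, hq.ne'⟩) h1
    · have hmem : 1 ∈ (Nat.gcd h (q ^ s)).divisors.filter (fun d => ∃ l : ℕ, l ^ s = d) := by
        rw [Finset.mem_filter, Nat.mem_divisors]
        exact ⟨⟨one_dvd _, hgcd⟩, ⟨1, one_pow s⟩⟩
      exact Finset.le_sup (f := id) hmem

lemma prod_ite_neg_one {t : Finset ℕ} (ht : ∀ p ∈ t, Nat.Prime p) (s h : ℕ) :
    ∏ p ∈ t, (if p ^ s ∣ h then (-1 : ℂ) else 0)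
      = if (∏ p ∈ t, p) ^ s ∣ h then (-1 : ℂ) ^ t.card else 0 := by
  by_cases hc : ∀ p ∈ t, p ^ s ∣ h
  · rw [if_pos ((prod_pow_dvd_iff ht s h).mpr hc),
      Finset.prod_congr rfl (fun p hp => if_pos (hc p hp)), Finset.prod_const]
  · rw [if_neg (fun hd => hc ((prod_pow_dvd_iff ht s h).mp hd))]
    push_neg at hc; obtain ⟨p, hp, hpd⟩ := hc
    exact Finset.prod_eq_zero hp (if_neg hpd)

lemma prod_ite_pow {t : Finset ℕ} (ht : ∀ p ∈ t, Nat.Prime p) (s n : ℕ) :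
    ∏ p ∈ t, (if p ∣ n then ((p : ℂ)) ^ s else 0)
      = if (∏ p ∈ t, p) ∣ n then ((∏ p ∈ t, p : ℕ) : ℂ) ^ s else 0 := by
  have hiff : (∏ p ∈ t, p) ∣ n ↔ ∀ p ∈ t, p ∣ n := by
    have := prod_pow_dvd_iff ht 1 n; simpa using this
  by_cases hc : ∀ p ∈ t, p ∣ n
  · rw [if_pos (hiff.mpr hc), Finset.prod_congr rfl (fun p hp => if_pos (hc p hp))]
    push_cast
    rw [Finset.prod_pow]
  · rw [if_neg (fun hd => hc (hiff.mp hd))]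
    push_neg at hc; obtain ⟨p, hp, hpd⟩ := hc
    exact Finset.prod_eq_zero hp (if_neg hpd)

lemma sum_multiples (d M : ℕ) (hd : 0 < d) (F : ℕ → ℂ) :
    ∑ h ∈ Finset.Icc 1 (d * M), (if d ∣ h then F h else 0)
      = ∑ j ∈ Finset.Icc 1 M, F (d * j) := by
  classical
  rw [← Finset.sum_filter]
  apply Finset.sum_nbij' (i := fun h => h / d) (j := fun j => d * j)
  · intro h hh
    rw [Finset.mem_filter, Finset.mem_Icc] at hh
    obtain ⟨⟨h1, h2⟩, hdvd⟩ := hh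
    rw [Finset.mem_Icc]
    refine ⟨(Nat.one_le_div_iff hd).mpr (Nat.le_of_dvd h1 hdvd), ?_⟩
    have := Nat.div_le_div_right (c := d) h2
    rwa [Nat.mul_div_cancel_left M hd] at this
  · intro j hj
    rw [Finset.mem_Icc] at hj
    rw [Finset.mem_filter, Finset.mem_Icc]
    exact ⟨⟨Nat.one_le_iff_ne_zero.mpr (Nat.mul_ne_zero hd.ne' (by omega)),
      Nat.mul_le_mul_left d hj.2⟩, dvd_mul_right d j⟩
  · intro h hh
    exact Nat.mul_div_cancel' (Finset.mem_filter.mp hh).2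
  · intro j _
    exact Nat.mul_div_cancel_left j hd
  · intro h hh
    rw [Nat.mul_div_cancel' (Finset.mem_filter.mp hh).2]

lemma cohen_eval (s n : ℕ) (hs : 0 < s) {q : ℕ} (hq : Squarefree q) :
    cohenRamanujanSum s q (n ^ s)
      = ∏ p ∈ q.primeFactors, (if p ∣ n then (p : ℂ) ^ s - 1 else -1) := by
  classical
  have hq0 : 0 < q := Nat.pos_of_ne_zero hq.ne_zero
  have hpf : ∀ p ∈ q.primeFactors, Nat.Prime p := fun p hp => Nat.prime_of_mem_primeFactors hp
  set E : ℕ → ℂ := fun h =>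
    Complex.exp (2 * Real.pi * Complex.I * ((n ^ s : ℕ) : ℂ) * (h : ℂ) / ((q : ℂ)) ^ s)
    with hE
  have main : cohenRamanujanSum s q (n ^ s)
      = ∑ h ∈ Finset.Icc 1 (q ^ s),
          (∏ p ∈ q.primeFactors, ((if p ^ s ∣ h then (-1 : ℂ) else 0) + 1)) * E h := by
    unfold cohenRamanujanSum
    apply Finset.sum_congr rfl
    intro h hh
    have hh1 : 0 < h := (Finset.mem_Icc.mp hh).1
    by_cases hg : ∀ p ∈ q.primeFactors, ¬ p ^ s ∣ h
    · rw [if_pos ((genGcd_eq_one_iff hs hq0 hh1).mpr hg),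
        Finset.prod_congr rfl (fun p hp =>
          show ((if p ^ s ∣ h then (-1 : ℂ) else 0) + 1) = 1 by
            rw [if_neg (hg p hp)]; norm_num),
        Finset.prod_const_one, one_mul]
    · push_neg at hg
      obtain ⟨p, hp, hpd⟩ := hg
      rw [if_neg (fun hone => (genGcd_eq_one_iff hs hq0 hh1).mp hone p hp hpd),
        Finset.prod_eq_zero hp
          (show (if p ^ s ∣ h then (-1 : ℂ) else 0) + 1 = 0 by rw [if_pos hpd]; norm_num),
        zero_mul]
  rw [main]
  have expand : ∀ h : ℕ,
      (∏ p ∈ q.primeFactors, ((if p ^ s ∣ h then (-1 : ℂ) else 0) + 1))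
      = ∑ t ∈ q.primeFactors.powerset,
          (if (∏ p ∈ t, p) ^ s ∣ h then (-1 : ℂ) ^ t.card else 0) := by
    intro h
    rw [Finset.prod_add]
    apply Finset.sum_congr rfl
    intro t ht
    rw [Finset.prod_const_one, mul_one]
    exact prod_ite_neg_one (fun p hp => hpf p (Finset.mem_powerset.mp ht hp)) s h
  simp_rw [expand, Finset.sum_mul]
  rw [Finset.sum_comm]
  have inner : ∀ t ∈ q.primeFactors.powerset,
      (∑ h ∈ Finset.Icc 1 (q ^ s),
        (if (∏ p ∈ t, p) ^ s ∣ h then (-1 : ℂ) ^ t.card else 0) * E h)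
      = (-1 : ℂ) ^ t.card *
          (if (q / ∏ p ∈ t, p) ∣ n then ((q / ∏ p ∈ t, p : ℕ) : ℂ) ^ s else 0) := by
    intro t ht
    set D := ∏ p ∈ t, p with hD
    have htsub := Finset.mem_powerset.mp ht
    have hDpos : 0 < D := Finset.prod_pos (fun p hp => (hpf p (htsub hp)).pos)
    have hDdvd : D ∣ q := by
      have h1 : D ∣ ∏ p ∈ q.primeFactors, p := Finset.prod_dvd_prod_of_subset _ _ _ htsub
      rwa [Nat.prod_primeFactors_of_squarefree hq] at h1
    set e := q / D with he
    have hepos : 0 < e := Nat.div_pos (Nat.le_of_dvd hq0 hDdvd) hDpos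
    have hqe : q = D * e := (Nat.mul_div_cancel' hDdvd).symm
    have hQe : q ^ s = (D ^ s) * (e ^ s) := by rw [hqe, mul_pow]
    have hsplit : ∀ h : ℕ, (if D ^ s ∣ h then (-1 : ℂ) ^ t.card else 0) * E h
        = (-1 : ℂ) ^ t.card * (if D ^ s ∣ h then E h else 0) := by
      intro h; by_cases hd : D ^ s ∣ h <;> simp [hd]
    simp_rw [hsplit, ← Finset.mul_sum]
    congr 1
    rw [hQe, sum_multiples (D ^ s) (e ^ s) (pow_pos hDpos s) E]
    have hEj : ∀ j : ℕ, E (D ^ s * j)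
        = Complex.exp (2 * Real.pi * Complex.I * ((n ^ s : ℕ) : ℂ) * (j : ℂ)
            / ((e ^ s : ℕ) : ℂ)) := by
      intro j
      have hD0 : ((D : ℂ)) ^ s ≠ 0 := pow_ne_zero _ (Nat.cast_ne_zero.mpr hDpos.ne')
      have he0 : ((e : ℂ)) ^ s ≠ 0 := pow_ne_zero _ (Nat.cast_ne_zero.mpr hepos.ne')
      have he0' : ((e ^ s : ℕ) : ℂ) ≠ 0 := by push_cast; exact he0
      simp only [hE]
      congr 1
      have hqDE : ((q : ℂ)) ^ s = ((D : ℂ)) ^ s * ((e : ℂ)) ^ s := by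
        rw [show q = D * e from hqe]; push_cast; ring
      rw [hqDE, div_eq_div_iff (mul_ne_zero hD0 he0) he0']
      push_cast
      ring
    simp_rw [hEj]
    rw [sum_exp_Icc (e ^ s) (n ^ s) (pow_pos hepos s)]
    simp only [Nat.pow_dvd_pow_iff hs.ne']
    push_cast
    rfl
  rw [Finset.sum_congr rfl inner]
  have target : ∏ p ∈ q.primeFactors, (if p ∣ n then (p : ℂ) ^ s - 1 else -1)
      = ∑ t ∈ q.primeFactors.powerset,
          (if (∏ p ∈ t, p) ∣ n then ((∏ p ∈ t, p : ℕ) : ℂ) ^ s else 0) *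
            (-1 : ℂ) ^ (q.primeFactors \ t).card := by
    have hsplit : ∀ p ∈ q.primeFactors, (if p ∣ n then (p : ℂ) ^ s - 1 else -1)
        = (if p ∣ n then (p : ℂ) ^ s else 0) + (-1) := by
      intro p _; by_cases hp : p ∣ n <;> simp [hp, sub_eq_add_neg]
    rw [Finset.prod_congr rfl hsplit, Finset.prod_add]
    apply Finset.sum_congr rfl
    intro t ht
    rw [prod_ite_pow (fun p hp => hpf p (Finset.mem_powerset.mp ht hp)) s n, Finset.prod_const]
  rw [target]
  apply Finset.sum_nbij' (i := fun t => q.primeFactors \ t) (j := fun t => q.primeFactors \ t)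
  · intro t _
    exact Finset.mem_powerset.mpr (Finset.sdiff_subset)
  · intro t _
    exact Finset.mem_powerset.mpr (Finset.sdiff_subset)
  · intro t ht
    exact Finset.sdiff_sdiff_eq_self (Finset.mem_powerset.mp ht)
  · intro t ht
    exact Finset.sdiff_sdiff_eq_self (Finset.mem_powerset.mp ht)
  · intro t ht
    have htsub := Finset.mem_powerset.mp ht
    have hqdiv : q / (∏ p ∈ t, p) = ∏ p ∈ q.primeFactors \ t, p := by
      have h1 : (∏ p ∈ q.primeFactors \ t, p) * (∏ p ∈ t, p) = q := by
        rw [Finset.prod_sdiff htsub, Nat.prod_primeFactors_of_squarefree hq]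
      have hDpos : 0 < ∏ p ∈ t, p := Finset.prod_pos (fun p hp => (hpf p (htsub hp)).pos)
      exact Nat.div_eq_of_eq_mul_left hDpos h1.symm
    rw [hqdiv, Finset.sdiff_sdiff_eq_self htsub, mul_comm]

lemma jordan_eval (m : ℕ) {q : ℕ} (hq : Squarefree q) :
    jordanTotient (m : ℝ) q = ∏ p ∈ q.primeFactors, ((p : ℝ) ^ m - 1) := by
  unfold jordanTotient
  rw [Real.rpow_natCast]
  have hqprod : (q : ℝ) = ∏ p ∈ q.primeFactors, (p : ℝ) := by
    rw [← Nat.cast_prod, Nat.prod_primeFactors_of_squarefree hq]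
  have hfac : ∀ p ∈ q.primeFactors, (1 - 1 / (p : ℝ) ^ (m : ℝ)) = (1 - 1 / (p : ℝ) ^ m) := by
    intro p _; rw [Real.rpow_natCast]
  rw [Finset.prod_congr rfl hfac, hqprod, ← Finset.prod_pow, ← Finset.prod_mul_distrib]
  apply Finset.prod_congr rfl
  intro p hp
  have hppos : (0 : ℝ) < p := by exact_mod_cast (Nat.prime_of_mem_primeFactors hp).pos
  have hpm : (p : ℝ) ^ m ≠ 0 := by positivity
  rw [mul_sub, mul_one, mul_one_div, div_self hpm]

lemma denom_pos (m : ℕ) (hm : 0 < m) (q : ℕ) :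
    0 < ∏ p ∈ q.primeFactors, ((p : ℝ) ^ m - 1) := by
  apply Finset.prod_pos
  intro p hp
  have h2 : (2 : ℝ) ≤ p := by exact_mod_cast (Nat.prime_of_mem_primeFactors hp).two_le
  have : (2 : ℝ) ≤ (p : ℝ) ^ m := le_trans h2 (le_self_pow₀ (by linarith) hm.ne')
  linarith

lemma denom_ge (m : ℕ) (hm : 2 ≤ m) {q : ℕ} (hq : Squarefree q) :
    ((q : ℝ)) ^ 2 / 2 ≤ ∏ p ∈ q.primeFactors, ((p : ℝ) ^ m - 1) := by
  have hq0 : 0 < q := Nat.pos_of_ne_zero hq.ne_zero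
  have hprimes : ∀ p ∈ q.primeFactors, (2 : ℝ) ≤ p := fun p hp => by
    exact_mod_cast (Nat.prime_of_mem_primeFactors hp).two_le
  have h1 : ∏ p ∈ q.primeFactors, ((p : ℝ) ^ m - 1)
      = ((q : ℝ)) ^ m * ∏ p ∈ q.primeFactors, (1 - 1 / (p : ℝ) ^ m) := by
    have hqprod : (q : ℝ) = ∏ p ∈ q.primeFactors, (p : ℝ) := by
      rw [← Nat.cast_prod, Nat.prod_primeFactors_of_squarefree hq]
    rw [hqprod, ← Finset.prod_pow, ← Finset.prod_mul_distrib]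
    apply Finset.prod_congr rfl
    intro p hp
    have hppos : (0 : ℝ) < p := by linarith [hprimes p hp]
    have hpm : (p : ℝ) ^ m ≠ 0 := by positivity
    rw [mul_sub, mul_one, mul_one_div, div_self hpm]
  rw [h1]
  have h2 : ∏ p ∈ q.primeFactors, (1 - 1 / (p : ℝ) ^ 2)
      ≤ ∏ p ∈ q.primeFactors, (1 - 1 / (p : ℝ) ^ m) := by
    apply Finset.prod_le_prod
    · intro p hp
      exact (one_sub_mem (Nat.prime_of_mem_primeFactors hp).two_le).1
    · intro p hp
      have h2p : (2 : ℝ) ≤ p := hprimes p hp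
      have hle : (p : ℝ) ^ 2 ≤ (p : ℝ) ^ m := pow_le_pow_right₀ (by linarith) hm
      have hp2 : (0 : ℝ) < (p : ℝ) ^ 2 := by positivity
      have : 1 / (p : ℝ) ^ m ≤ 1 / (p : ℝ) ^ 2 := by
        apply one_div_le_one_div_of_le hp2 hle
      linarith
  have h3 : (1 / 2 : ℝ) ≤ ∏ p ∈ q.primeFactors, (1 - 1 / (p : ℝ) ^ m) := by
    refine le_trans ?_ h2
    exact half_le_prod_one_sub fun p hp => (Nat.prime_of_mem_primeFactors hp).two_le
  have hq1 : (1 : ℝ) ≤ q := by exact_mod_cast hq0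
  have h4 : ((q : ℝ)) ^ 2 ≤ ((q : ℝ)) ^ m := pow_le_pow_right₀ hq1 hm
  calc ((q : ℝ)) ^ 2 / 2 = ((q : ℝ)) ^ 2 * (1 / 2) := by ring
    _ ≤ ((q : ℝ)) ^ m * ∏ p ∈ q.primeFactors, (1 - 1 / (p : ℝ) ^ m) := by
        apply mul_le_mul h4 h3 (by norm_num) (by positivity)

noncomputable def fwAux (m : ℕ) (w : ℕ → ℝ) (q : ℕ) : ℝ :=
  if Squarefree q then
    (∏ p ∈ q.primeFactors, w p) / (∏ p ∈ q.primeFactors, ((p : ℝ) ^ m - 1)) else 0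

lemma fwAux_one (m : ℕ) (w : ℕ → ℝ) : fwAux m w 1 = 1 := by
  simp [fwAux, squarefree_one]

lemma fwAux_zero (m : ℕ) (w : ℕ → ℝ) : fwAux m w 0 = 0 := by
  simp [fwAux, not_squarefree_zero]

lemma fwAux_mul (m : ℕ) (w : ℕ → ℝ) {a b : ℕ} (hab : a.Coprime b) :
    fwAux m w (a * b) = fwAux m w a * fwAux m w b := by
  rcases eq_or_ne a 0 with rfl | ha0
  · have hb : b = 1 := by simpa using hab
    subst hb
    simp [fwAux_zero, fwAux_one]
  rcases eq_or_ne b 0 with rfl | hb0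
  · have ha : a = 1 := by simpa using hab
    subst ha
    simp [fwAux_zero, fwAux_one]
  by_cases hsq : Squarefree (a * b)
  · have hA : Squarefree a := hsq.squarefree_of_dvd (dvd_mul_right a b)
    have hB : Squarefree b := hsq.squarefree_of_dvd (dvd_mul_left b a)
    rw [fwAux, fwAux, fwAux, if_pos hsq, if_pos hA, if_pos hB,
      Nat.primeFactors_mul ha0 hb0,
      Finset.prod_union hab.disjoint_primeFactors,
      Finset.prod_union hab.disjoint_primeFactors,
      div_mul_div_comm]
  · have hor : ¬ Squarefree a ∨ ¬ Squarefree b := by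
      by_contra hcon
      push_neg at hcon
      exact hsq ((Nat.squarefree_mul hab).mpr ⟨hcon.1, hcon.2⟩)
    rcases hor with h | h
    · simp [fwAux, if_neg hsq, if_neg h]
    · simp [fwAux, if_neg hsq, if_neg h]

lemma fwAux_prime (m : ℕ) (w : ℕ → ℝ) {p : ℕ} (hp : p.Prime) :
    fwAux m w p = w p / ((p : ℝ) ^ m - 1) := by
  rw [fwAux, if_pos hp.squarefree, hp.primeFactors]
  simp

lemma fwAux_prime_pow (m : ℕ) (w : ℕ → ℝ) {p : ℕ} (hp : p.Prime) {e : ℕ} (he : 2 ≤ e) :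
    fwAux m w (p ^ e) = 0 := by
  rw [fwAux, if_neg]
  intro hsq
  have hdvd : p * p ∣ p ^ e := by
    rw [← sq]
    exact pow_dvd_pow p he
  have := hsq p hdvd
  rw [Nat.isUnit_iff] at this
  exact hp.one_lt.ne' this

lemma fwAux_norm_le (m : ℕ) (hm : 2 ≤ m) (w : ℕ → ℝ) (C : ℝ)
    (hw : ∀ q : ℕ, Squarefree q → |∏ p ∈ q.primeFactors, w p| ≤ C) (q : ℕ) :
    ‖fwAux m w q‖ ≤ (2 * C) * (1 / (q : ℝ) ^ 2) := by
  have hC : 0 ≤ C := by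
    have h1 := hw 1 squarefree_one
    simp only [Nat.primeFactors_one, Finset.prod_empty, abs_one] at h1
    linarith
  by_cases hsq : Squarefree q
  · have hq0 : 0 < q := Nat.pos_of_ne_zero hsq.ne_zero
    have hqR : (0 : ℝ) < (q : ℝ) ^ 2 := by positivity
    rw [fwAux, if_pos hsq, Real.norm_eq_abs, abs_div,
      abs_of_pos (denom_pos m (by omega) q)]
    have hd := denom_ge m hm hsq
    have hnum := hw q hsq
    rw [div_le_iff₀ (denom_pos m (by omega) q)]
    calc |∏ p ∈ q.primeFactors, w p| ≤ C := hnum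
      _ = (2 * C) * (1 / (q : ℝ) ^ 2) * ((q : ℝ) ^ 2 / 2) := by
          field_simp
      _ ≤ (2 * C) * (1 / (q : ℝ) ^ 2) * ∏ p ∈ q.primeFactors, ((p : ℝ) ^ m - 1) := by
          apply mul_le_mul_of_nonneg_left hd (by positivity)
  · rw [fwAux, if_neg hsq]
    simp only [norm_zero]
    positivity

lemma fwAux_summable (m : ℕ) (hm : 2 ≤ m) (w : ℕ → ℝ) (C : ℝ)
    (hw : ∀ q : ℕ, Squarefree q → |∏ p ∈ q.primeFactors, w p| ≤ C) :
    Summable (fun q => ‖fwAux m w q‖) := by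
  apply Summable.of_nonneg_of_le (fun q => norm_nonneg _) (fwAux_norm_le m hm w C hw)
  exact (Real.summable_one_div_nat_pow.mpr one_lt_two).mul_left _

lemma fwAux_hasProd (m : ℕ) (hm : 2 ≤ m) (w : ℕ → ℝ) (C : ℝ)
    (hw : ∀ q : ℕ, Squarefree q → |∏ p ∈ q.primeFactors, w p| ≤ C) :
    HasProd (fun p : Nat.Primes => 1 + fwAux m w (p : ℕ)) (∑' q, fwAux m w q) := by
  have h := EulerProduct.eulerProduct_hasProd (f := fwAux m w) (fwAux_one m w)
    (fun {a b} hab => fwAux_mul m w hab) (fwAux_summable m hm w C hw) (fwAux_zero m w)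
  have heq : (fun p : Nat.Primes => ∑' e : ℕ, fwAux m w ((p : ℕ) ^ e))
      = fun p : Nat.Primes => 1 + fwAux m w (p : ℕ) := by
    funext p
    have h2 : ∑' e : ℕ, fwAux m w ((p : ℕ) ^ e)
        = ∑ e ∈ Finset.range 2, fwAux m w ((p : ℕ) ^ e) := by
      apply tsum_eq_sum
      intro e he
      rw [Finset.mem_range] at he
      exact fwAux_prime_pow m w p.2 (by omega)
    rw [h2]
    simp [Finset.sum_range_succ, fwAux_one]
  rw [← heq]
  exact h

lemma prod_w_bound (s n : ℕ) (hn : 0 < n) (w : ℕ → ℝ)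
    (hw : ∀ p : ℕ, p.Prime → |w p| ≤ (if p ∣ n then (p : ℝ) ^ s else 1)) :
    ∀ q : ℕ, Squarefree q → |∏ p ∈ q.primeFactors, w p| ≤ (n : ℝ) ^ s := by
  intro q hq
  classical
  calc |∏ p ∈ q.primeFactors, w p| = ∏ p ∈ q.primeFactors, |w p| := Finset.abs_prod _ _
    _ ≤ ∏ p ∈ q.primeFactors, (if p ∣ n then (p : ℝ) ^ s else 1) := by
        apply Finset.prod_le_prod (fun p _ => abs_nonneg _)
        exact fun p hp => hw p (Nat.prime_of_mem_primeFactors hp)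
    _ = ∏ p ∈ q.primeFactors.filter (· ∣ n), (p : ℝ) ^ s := (Finset.prod_filter _ _).symm
    _ = ((∏ p ∈ q.primeFactors.filter (· ∣ n), p : ℕ) : ℝ) ^ s := by
        rw [Finset.prod_pow, ← Nat.cast_prod]
    _ ≤ (n : ℝ) ^ s := by
        apply pow_le_pow_left₀ (by positivity)
        have hdvd : (∏ p ∈ q.primeFactors.filter (· ∣ n), p) ∣ n := by
          apply Finset.prod_primes_dvd
          · exact fun p hp =>
              (Nat.prime_of_mem_primeFactors (Finset.mem_filter.mp hp).1).prime
          · exact fun p hp => (Finset.mem_filter.mp hp).2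
        exact_mod_cast Nat.le_of_dvd hn hdvd

/-- For all positive integers `s, k, n`, the series
`∑_{q ≥ 1} μ(q) c_q^s(n^s) / J_{s+k}(q)` converges and equals
`∏_{p ∣ n} (1 - (p^s - 1)/(p^{s+k} - 1)) · ∏_{p ∤ n} (1 + 1/(p^{s+k} - 1))`,
where the second (infinite) product, taken over all primes not dividing `n`,
converges. -/
theorem cohenRamanujan_series_jordan_prod (s k n : ℕ) (hs : 0 < s) (hk : 0 < k)
    (hn : 0 < n) :
    ∃ P : ℝ,
      HasProd (fun p : {p : ℕ // p.Prime ∧ ¬ p ∣ n} =>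
        1 + 1 / ((p.1 : ℝ) ^ (s + k) - 1)) P ∧
      Filter.Tendsto
        (fun N : ℕ => ∑ q ∈ Finset.Icc 1 N,
          (ArithmeticFunction.moebius q : ℂ) * cohenRamanujanSum s q (n ^ s) /
            ((jordanTotient ((s : ℝ) + (k : ℝ)) q : ℝ) : ℂ))
        Filter.atTop
        (nhds ((((∏ p ∈ n.primeFactors,
          (1 - ((p : ℝ) ^ s - 1) / ((p : ℝ) ^ (s + k) - 1))) * P : ℝ)) : ℂ)) := by
  classical
  set m := s + k with hmdef
  have hm2 : 2 ≤ m := by omega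
  set w₁ : ℕ → ℝ := fun p => if p ∣ n then -((p : ℝ) ^ s - 1) else 1 with hw₁def
  set w₂ : ℕ → ℝ := fun p => if p ∣ n then 0 else 1 with hw₂def
  have hw₁b : ∀ p : ℕ, p.Prime → |w₁ p| ≤ (if p ∣ n then (p : ℝ) ^ s else 1) := by
    intro p hp
    have hp1 : (1 : ℝ) ≤ (p : ℝ) := by exact_mod_cast hp.one_lt.le
    have hps : (1 : ℝ) ≤ (p : ℝ) ^ s := by
      calc (1 : ℝ) = 1 ^ s := (one_pow s).symm
        _ ≤ (p : ℝ) ^ s := pow_le_pow_left₀ zero_le_one hp1 s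
    by_cases hpn : p ∣ n
    · rw [hw₁def]
      simp only [if_pos hpn]
      rw [abs_neg, abs_of_nonneg (by linarith)]
      linarith
    · rw [hw₁def]
      simp only [if_neg hpn]
      norm_num
  have hw₂b : ∀ p : ℕ, p.Prime → |w₂ p| ≤ (if p ∣ n then (p : ℝ) ^ s else 1) := by
    intro p hp
    by_cases hpn : p ∣ n
    · rw [hw₂def]
      simp only [if_pos hpn, abs_zero]
      positivity
    · rw [hw₂def]
      simp only [if_neg hpn]
      norm_num
  have hP₂ := fwAux_hasProd m hm2 w₂ ((n : ℝ) ^ s) (prod_w_bound s n hn w₂ hw₂b)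
  have hP₁ := fwAux_hasProd m hm2 w₁ ((n : ℝ) ^ s) (prod_w_bound s n hn w₁ hw₁b)
  set P : ℝ := ∑' q, fwAux m w₂ q with hPdef
  refine ⟨P, ?_, ?_⟩
  · have h1 : HasProd (Set.mulIndicator {p : ℕ | Nat.Prime p}
        (fun q : ℕ => 1 + fwAux m w₂ q)) P :=
      (hasProd_subtype_iff_mulIndicator).mp hP₂
    have h2 : Set.mulIndicator {p : ℕ | Nat.Prime p} (fun q : ℕ => 1 + fwAux m w₂ q)
        = Set.mulIndicator {p : ℕ | Nat.Prime p ∧ ¬ p ∣ n}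
            (fun q : ℕ => 1 + 1 / ((q : ℝ) ^ m - 1)) := by
      funext p
      by_cases hp : Nat.Prime p
      · by_cases hpn : p ∣ n
        · rw [Set.mulIndicator_of_mem (by exact hp),
            Set.mulIndicator_of_notMem (by simp [hpn])]
          rw [fwAux_prime m w₂ hp, hw₂def]
          simp [hpn]
        · rw [Set.mulIndicator_of_mem (by exact hp),
            Set.mulIndicator_of_mem (by exact ⟨hp, hpn⟩)]
          rw [fwAux_prime m w₂ hp, hw₂def]
          simp [hpn]
      · rw [Set.mulIndicator_of_notMem (by exact hp),
          Set.mulIndicator_of_notMem (by simp [hp])]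
    rw [h2] at h1
    exact (hasProd_subtype_iff_mulIndicator).mpr h1
  · set Q : ℝ := ∏ p ∈ n.primeFactors, (1 - ((p : ℝ) ^ s - 1) / ((p : ℝ) ^ m - 1)) with hQdef
    set c : Nat.Primes → ℝ := fun p =>
      if (p : ℕ) ∣ n then (1 - (((p : ℕ) : ℝ) ^ s - 1) / (((p : ℕ) : ℝ) ^ m - 1)) else 1
      with hcdef
    set t : Finset Nat.Primes := n.primeFactors.subtype Nat.Prime with htdef
    have hc : HasProd c Q := by
      have h0 : ∀ p : Nat.Primes, p ∉ t → c p = 1 := by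
        intro p hpt
        rw [hcdef]
        simp only
        rw [if_neg]
        intro hpn
        apply hpt
        rw [htdef]
        exact Finset.mem_subtype.mpr (Nat.mem_primeFactors.mpr ⟨p.2, hpn, hn.ne'⟩)
      have hprod := hasProd_prod_of_ne_finset_one (L := SummationFilter.unconditional _) h0
      have hval : ∏ p ∈ t, c p = Q := by
        rw [hQdef, htdef]
        symm
        apply Finset.prod_bij
          (i := fun (a : ℕ) (ha : a ∈ n.primeFactors) =>
            (⟨a, Nat.prime_of_mem_primeFactors ha⟩ : Nat.Primes))
        · intro a ha
          rw [Finset.mem_subtype]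
          exact ha
        · intro a ha b hb hab
          exact congrArg Subtype.val hab
        · intro p hp
          rw [Finset.mem_subtype] at hp
          exact ⟨(p : ℕ), hp, rfl⟩
        · intro a ha
          rw [hcdef]
          simp only
          rw [if_pos (Nat.dvd_of_mem_primeFactors ha)]
      rwa [hval] at hprod
    have hfuneq : (fun p : Nat.Primes => c p * (1 + fwAux m w₂ (p : ℕ)))
        = fun p : Nat.Primes => 1 + fwAux m w₁ (p : ℕ) := by
      funext p
      rw [fwAux_prime m w₂ p.2, fwAux_prime m w₁ p.2, hcdef, hw₁def, hw₂def]
      simp only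
      by_cases hpn : (p : ℕ) ∣ n
      · rw [if_pos hpn, if_pos hpn, if_pos hpn, zero_div, add_zero, mul_one, neg_div]
        ring
      · rw [if_neg hpn, if_neg hpn, if_neg hpn, one_mul]
    have hQP : HasProd (fun p : Nat.Primes => 1 + fwAux m w₁ (p : ℕ)) (Q * P) := by
      rw [← hfuneq]
      exact hc.mul hP₂
    have htsum : ∑' q, fwAux m w₁ q = Q * P := hP₁.unique hQP
    have hsummable : Summable (fwAux m w₁) :=
      (fwAux_summable m hm2 w₁ _ (prod_w_bound s n hn w₁ hw₁b)).of_norm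
    have hhs : HasSum (fwAux m w₁) (Q * P) := htsum ▸ hsummable.hasSum
    have ht0 := hhs.tendsto_sum_nat
    have ht1 : Filter.Tendsto (fun N : ℕ => ∑ q ∈ Finset.Icc 1 N, fwAux m w₁ q)
        Filter.atTop (nhds (Q * P)) := by
      have hcomp : Filter.Tendsto (fun N : ℕ => ∑ q ∈ Finset.range (N + 1), fwAux m w₁ q)
          Filter.atTop (nhds (Q * P)) := ht0.comp (tendsto_add_atTop_nat 1)
      refine hcomp.congr ?_
      intro N
      rw [Finset.range_eq_Ico, Finset.sum_eq_sum_Ico_succ_bot (by omega), fwAux_zero,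
        zero_add, Finset.Ico_add_one_right_eq_Icc]
    have hterm : ∀ q : ℕ,
        (ArithmeticFunction.moebius q : ℂ) * cohenRamanujanSum s q (n ^ s) /
          ((jordanTotient ((s : ℝ) + (k : ℝ)) q : ℝ) : ℂ) = ((fwAux m w₁ q : ℝ) : ℂ) := by
      intro q
      by_cases hsq : Squarefree q
      · have hq0 : q ≠ 0 := hsq.ne_zero
        have hcast : ((s : ℝ) + (k : ℝ)) = ((m : ℕ) : ℝ) := by rw [hmdef]; push_cast; ring
        rw [hcast, jordan_eval m hsq, cohen_eval s n hs hsq]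
        rw [fwAux, if_pos hsq]
        have hμ : (ArithmeticFunction.moebius q : ℂ) = (-1 : ℂ) ^ q.primeFactors.card := by
          rw [ArithmeticFunction.moebius_apply_of_squarefree hsq]
          have hωΩ : ArithmeticFunction.cardFactors q = q.primeFactors.card := by
            rw [← (ArithmeticFunction.cardDistinctFactors_eq_cardFactors_iff_squarefree
              hq0).mpr hsq, ArithmeticFunction.cardDistinctFactors_apply]
            exact (List.card_toFinset _).symm
          rw [hωΩ]
          push_cast
          ring
        rw [hμ, Complex.ofReal_div, Complex.ofReal_prod, Complex.ofReal_prod]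
        have hdenom : ∀ p ∈ q.primeFactors,
            (((((p : ℕ) : ℝ)) ^ m - 1 : ℝ) : ℂ) = ((p : ℂ) ^ m - 1) := by
          intro p _
          push_cast
          ring
        have hfac : ∀ p ∈ q.primeFactors,
            ((w₁ p : ℝ) : ℂ) = -(if p ∣ n then (p : ℂ) ^ s - 1 else -1) := by
          intro p _
          rw [hw₁def]
          by_cases hpn : p ∣ n
          · simp only [if_pos hpn]
            push_cast
            ring
          · simp only [if_neg hpn]
            norm_num
        rw [Finset.prod_congr rfl hdenom, Finset.prod_congr rfl hfac,
          Finset.prod_congr rfl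
            (fun p _ => neg_eq_neg_one_mul (if p ∣ n then (p : ℂ) ^ s - 1 else -1)),
          Finset.prod_mul_distrib, Finset.prod_const]
      · rw [ArithmeticFunction.moebius_eq_zero_of_not_squarefree hsq, fwAux, if_neg hsq]
        simp
    have hfun : (fun N : ℕ => ∑ q ∈ Finset.Icc 1 N,
        (ArithmeticFunction.moebius q : ℂ) * cohenRamanujanSum s q (n ^ s) /
          ((jordanTotient ((s : ℝ) + (k : ℝ)) q : ℝ) : ℂ))
        = fun N : ℕ => (((∑ q ∈ Finset.Icc 1 N, fwAux m w₁ q : ℝ)) : ℂ) := by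
      funext N
      rw [Complex.ofReal_sum]
      exact Finset.sum_congr rfl fun q _ => hterm q
    rw [hfun]
    exact (Complex.continuous_ofReal.tendsto (Q * P)).comp ht1
end

section
/- Let s be a positive integer and let h = m^s k where m, k are positive integers and k is s-power free (no prime p satisfies p^s | k). Then for every positive integer r, c_r^s(h) = c_r^s(m^s). -/
open Finset Filter

/-! ### Auxiliary lemmas -/

lemma myAux_sum_moebius (n : ℕ) :
    ∑ d ∈ n.divisors, (ArithmeticFunction.moebius d : ℂ) = if n = 1 then 1 else 0 := by
  have h2 : ((ArithmeticFunction.moebius * ArithmeticFunction.zeta :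
      ArithmeticFunction ℤ)) n = (1 : ArithmeticFunction ℤ) n := by
    rw [ArithmeticFunction.moebius_mul_coe_zeta]
  rw [ArithmeticFunction.coe_mul_zeta_apply, ArithmeticFunction.one_apply] at h2
  have := congrArg (fun z : ℤ => (z : ℂ)) h2
  simpa [apply_ite (fun z : ℤ => (z : ℂ))] using this

lemma myAux_squarefree_prod (t : Finset ℕ) (hp : ∀ p ∈ t, p.Prime) :
    Squarefree (∏ p ∈ t, p) := by
  induction t using Finset.induction_on with
  | empty => simpa using squarefree_one
  | @insert a t ha ih =>
    rw [Finset.prod_insert ha]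
    have hcop : Nat.Coprime a (∏ p ∈ t, p) := by
      apply Nat.Coprime.prod_right
      intro q hq
      exact (Nat.coprime_primes (hp a (mem_insert_self a t)) (hp q (mem_insert_of_mem hq))).mpr
        (fun e => ha (e ▸ hq))
    exact (Nat.squarefree_mul hcop).mpr
      ⟨(hp a (mem_insert_self a t)).squarefree, ih fun p h => hp p (mem_insert_of_mem h)⟩

lemma myAux_prod_pow_dvd (s h : ℕ) (t : Finset ℕ) (hp : ∀ p ∈ t, p.Prime)
    (hd : ∀ p ∈ t, p ^ s ∣ h) : (∏ p ∈ t, p) ^ s ∣ h := by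
  induction t using Finset.induction_on with
  | empty => simpa using one_dvd h
  | @insert a t ha ih =>
    rw [Finset.prod_insert ha, mul_pow]
    have hcop : Nat.Coprime (a ^ s) ((∏ p ∈ t, p) ^ s) := by
      apply Nat.Coprime.pow
      apply Nat.Coprime.prod_right
      intro q hq
      exact (Nat.coprime_primes (hp a (mem_insert_self a t)) (hp q (mem_insert_of_mem hq))).mpr
        (fun e => ha (e ▸ hq))
    exact hcop.mul_dvd_of_dvd_of_dvd (hd a (mem_insert_self a t))
      (ih (fun p h' => hp p (mem_insert_of_mem h')) (fun p h' => hd p (mem_insert_of_mem h')))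

lemma myAux_genGcd_one_iff (s r h : ℕ) (hs : 0 < s) (hr : 0 < r) (hh : 0 < h) :
    genGcd s h (r ^ s) = 1 ↔ ∀ p : ℕ, p.Prime → p ∣ r → ¬ p ^ s ∣ h := by
  classical
  have hg : 0 < Nat.gcd h (r ^ s) := Nat.gcd_pos_of_pos_left _ hh
  unfold genGcd
  constructor
  · intro h1 p hp hpr hph
    have hps : p ^ s ∣ Nat.gcd h (r ^ s) :=
      Nat.dvd_gcd hph (pow_dvd_pow_of_dvd hpr s)
    have hmem : p ^ s ∈ (Nat.gcd h (r ^ s)).divisors.filter fun d => ∃ l, l ^ s = d := by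
      rw [Finset.mem_filter, Nat.mem_divisors]
      exact ⟨⟨hps, hg.ne'⟩, p, rfl⟩
    have hle := Finset.le_sup (f := id) hmem
    replace hle : id (p ^ s) ≤ 1 := by rw [← h1]; convert hle; rfl
    have h2 : 2 ≤ p ^ s := le_trans hp.two_le (Nat.le_self_pow hs.ne' p)
    simp only [id] at hle
    omega
  · intro H
    apply le_antisymm
    · apply Finset.sup_le
      intro d hd
      rw [@Finset.mem_filter _ _ (fun _ => Classical.dec _), Nat.mem_divisors] at hd
      obtain ⟨⟨hdvd, _⟩, l, rfl⟩ := hd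
      simp only [id]
      by_contra hgt
      push_neg at hgt
      have hl0 : l ≠ 0 := by
        rintro rfl
        rw [zero_pow hs.ne'] at hdvd
        have := Nat.eq_zero_of_zero_dvd hdvd
        omega
      have hl1 : l ≠ 1 := by
        rintro rfl
        simp at hgt
      obtain ⟨p, hp, hpl⟩ := Nat.exists_prime_and_dvd hl1
      have hls : l ^ s ∣ h := dvd_trans hdvd (Nat.gcd_dvd_left _ _)
      have hlr : l ∣ r := (Nat.pow_dvd_pow_iff hs.ne').mp (dvd_trans hdvd (Nat.gcd_dvd_right _ _))
      exact H p hp (hpl.trans hlr) ((pow_dvd_pow_of_dvd hpl s).trans hls)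
    · apply Finset.le_sup (f := id)
      rw [@Finset.mem_filter _ _ (fun _ => Classical.dec _), Nat.mem_divisors]
      exact ⟨⟨one_dvd _, hg.ne'⟩, 1, one_pow s⟩

lemma myAux_sum_exp_eq (M n : ℕ) (hM : 0 < M) :
    ∑ j ∈ Finset.Icc 1 M, Complex.exp (2 * Real.pi * Complex.I * n * j / M)
      = if M ∣ n then (M : ℂ) else 0 := by
  have hM0 : (M : ℂ) ≠ 0 := Nat.cast_ne_zero.mpr hM.ne'
  set z : ℂ := Complex.exp (2 * Real.pi * Complex.I * n / M) with hz
  have key : ∀ j : ℕ, Complex.exp (2 * Real.pi * Complex.I * n * j / M) = z ^ j := by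
    intro j
    rw [hz, ← Complex.exp_nat_mul]
    congr 1
    field_simp
  simp only [key]
  by_cases hdvd : M ∣ n
  · obtain ⟨c, rfl⟩ := hdvd
    have hz1 : z = 1 := by
      rw [hz]
      have : 2 * Real.pi * Complex.I * (M * c : ℕ) / M = (c : ℤ) * (2 * Real.pi * Complex.I) := by
        push_cast
        field_simp
      rw [this, Complex.exp_int_mul_two_pi_mul_I]
    simp [hz1, Nat.card_Icc]
  · have hzM : z ^ M = 1 := by
      rw [hz, ← Complex.exp_nat_mul]
      have : (M : ℂ) * (2 * Real.pi * Complex.I * n / M) = (n : ℤ) * (2 * Real.pi * Complex.I) := by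
        push_cast
        field_simp
      rw [this, Complex.exp_int_mul_two_pi_mul_I]
    have hpi : (2 * Real.pi * Complex.I : ℂ) ≠ 0 := by
      simp [Real.pi_ne_zero, Complex.I_ne_zero]
    have hz1 : z ≠ 1 := by
      intro hone
      rw [hz, Complex.exp_eq_one_iff] at hone
      obtain ⟨c, hc⟩ := hone
      field_simp at hc
      have hc' : 2 * Real.pi * Complex.I * (n : ℂ) = 2 * Real.pi * Complex.I * ((c : ℂ) * M) := by
        linear_combination (2 * Real.pi * Complex.I) * hc
      have hnc : (n : ℂ) = (c : ℂ) * M := mul_left_cancel₀ hpi hc'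
      have hni : (n : ℤ) = c * M := by exact_mod_cast hnc
      exact hdvd (Int.natCast_dvd_natCast.mp ⟨c, by rw [hni]; ring⟩)
    rw [if_neg hdvd]
    rw [show Finset.Icc 1 M = Finset.Ico 1 (M + 1) by rfl]
    rw [Finset.sum_Ico_eq_sum_range]
    simp only [Nat.add_sub_cancel, pow_add, pow_one]
    rw [← Finset.mul_sum, geom_sum_eq hz1, hzM]
    simp

lemma myAux_spowfree_dvd (s m k : ℕ) (hs : 0 < s) (hm : 0 < m) (hk : 0 < k)
    (hkfree : ∀ p : ℕ, p.Prime → ¬ p ^ s ∣ k) (d : ℕ) (hd : d ^ s ∣ m ^ s * k) : d ∣ m := by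
  have hd0 : d ≠ 0 := by
    rintro rfl
    rw [zero_pow hs.ne'] at hd
    have := Nat.eq_zero_of_zero_dvd hd
    have : m ^ s * k ≠ 0 := Nat.mul_ne_zero (pow_ne_zero _ hm.ne') hk.ne'
    omega
  rw [← Nat.factorization_le_iff_dvd hd0 hm.ne']
  rw [Finsupp.le_def]
  intro p
  by_cases hp : p.Prime
  · have hfle : (d ^ s).factorization ≤ (m ^ s * k).factorization :=
      (Nat.factorization_le_iff_dvd (pow_ne_zero _ hd0)
        (Nat.mul_ne_zero (pow_ne_zero _ hm.ne') hk.ne')).mpr hd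
    have h1 := hfle p
    rw [Nat.factorization_pow, Nat.factorization_mul (pow_ne_zero _ hm.ne') hk.ne',
      Nat.factorization_pow] at h1
    simp only [Finsupp.smul_apply, Finsupp.add_apply, smul_eq_mul] at h1
    have hks : k.factorization p < s := by
      by_contra hle
      push_neg at hle
      exact hkfree p hp ((Nat.Prime.pow_dvd_iff_le_factorization hp hk.ne').mpr hle)
    have h3 : s * d.factorization p < s * (m.factorization p + 1) := by
      rw [Nat.mul_succ]; omega
    have := Nat.lt_of_mul_lt_mul_left h3
    omega
  · simp [Nat.factorization_eq_zero_of_not_prime _ hp]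

lemma myAux_indicator_eq (s r : ℕ) (hs : 0 < s) (hr : 0 < r) (h : ℕ) (hh : 0 < h) :
    (if genGcd s h (r ^ s) = 1 then (1 : ℂ) else 0)
      = ∑ d ∈ r.divisors, (if d ^ s ∣ h then (ArithmeticFunction.moebius d : ℂ) else 0) := by
  classical
  set t : Finset ℕ := r.primeFactors.filter (fun p => p ^ s ∣ h) with ht
  have htp : ∀ p ∈ t, p.Prime := fun p hp =>
    Nat.prime_of_mem_primeFactors (Finset.mem_filter.mp hp).1
  set R : ℕ := ∏ p ∈ t, p with hR
  have hRsq : Squarefree R := myAux_squarefree_prod t htp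
  have hR0 : R ≠ 0 := hRsq.ne_zero
  have hRr : R ∣ r := by
    refine dvd_trans ?_ (Nat.prod_primeFactors_dvd r)
    exact Finset.prod_dvd_prod_of_subset _ _ _ (Finset.filter_subset _ _)
  have hRfac : R.primeFactors = t := Nat.primeFactors_prod htp
  have hstep : ∑ d ∈ r.divisors, (if d ^ s ∣ h then (ArithmeticFunction.moebius d : ℂ) else 0)
      = ∑ d ∈ R.divisors, (ArithmeticFunction.moebius d : ℂ) := by
    rw [← Finset.sum_subset (Nat.divisors_subset_of_dvd hr.ne' hRr)]
    · apply Finset.sum_congr rfl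
      intro d hd
      rw [Nat.mem_divisors] at hd
      have hdsq : Squarefree d := hRsq.squarefree_of_dvd hd.1
      have hdsub : d.primeFactors ⊆ t := hRfac ▸ Nat.primeFactors_mono hd.1 hR0
      have : d ^ s ∣ h := by
        rw [← Nat.prod_primeFactors_of_squarefree hdsq]
        exact myAux_prod_pow_dvd s h d.primeFactors
          (fun p hp => htp p (hdsub hp)) (fun p hp => (Finset.mem_filter.mp (hdsub hp)).2)
      rw [if_pos this]
    · intro d hd hnd
      rw [Nat.mem_divisors] at hd
      by_cases hds : d ^ s ∣ h
      · rw [if_pos hds]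
        by_cases hdsq : Squarefree d
        · exfalso
          apply hnd
          rw [Nat.mem_divisors]
          refine ⟨?_, hR0⟩
          have hsub : d.primeFactors ⊆ t := by
            intro p hp
            rw [Nat.mem_primeFactors] at hp
            rw [ht, Finset.mem_filter, Nat.mem_primeFactors]
            exact ⟨⟨hp.1, hp.2.1.trans hd.1, hr.ne'⟩,
              dvd_trans (pow_dvd_pow_of_dvd hp.2.1 s) hds⟩
          calc d = ∏ p ∈ d.primeFactors, p := (Nat.prod_primeFactors_of_squarefree hdsq).symm
            _ ∣ ∏ p ∈ t, p := Finset.prod_dvd_prod_of_subset _ _ _ hsub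
        · simp [ArithmeticFunction.moebius_eq_zero_of_not_squarefree hdsq]
      · rw [if_neg hds]
  rw [hstep, myAux_sum_moebius R]
  congr 1
  rw [eq_iff_iff, myAux_genGcd_one_iff s r h hs hr hh]
  constructor
  · intro H
    have hte : t = ∅ := by
      rw [Finset.eq_empty_iff_forall_notMem]
      intro p hp
      have hpp := htp p hp
      rw [ht, Finset.mem_filter, Nat.mem_primeFactors] at hp
      exact H p hpp hp.1.2.1 hp.2
    rw [hR, hte, Finset.prod_empty]
  · intro hR1 p hpp hpr hph
    have hpt : p ∈ t := by
      rw [ht, Finset.mem_filter, Nat.mem_primeFactors]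
      exact ⟨⟨hpp, hpr, hr.ne'⟩, hph⟩
    have hpR : p ∣ R := Finset.dvd_prod_of_mem _ hpt
    rw [hR1] at hpR
    exact hpp.one_lt.ne' (Nat.eq_one_of_dvd_one hpR)

lemma myAux_inner_sum (s r n d : ℕ) (hs : 0 < s) (hr : 0 < r) (hd : d ∣ r) (hd0 : 0 < d) :
    ∑ h ∈ (Finset.Icc 1 (r ^ s)).filter (fun h => d ^ s ∣ h),
        Complex.exp (2 * Real.pi * Complex.I * n * h / (r ^ s))
      = if (r / d) ^ s ∣ n then (((r / d) ^ s : ℕ) : ℂ) else 0 := by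
  classical
  set e := r / d with he
  have hde : d * e = r := Nat.mul_div_cancel' hd
  have he0 : 0 < e := Nat.div_pos (Nat.le_of_dvd hr hd) hd0
  have hes : 0 < e ^ s := pow_pos he0 s
  have hds : 0 < d ^ s := pow_pos hd0 s
  have hrs : d ^ s * e ^ s = r ^ s := by rw [← mul_pow, hde]
  rw [← myAux_sum_exp_eq (e ^ s) n hes]
  refine Finset.sum_nbij' (fun h => h / d ^ s) (fun j => d ^ s * j) ?_ ?_ ?_ ?_ ?_
  · intro a ha
    rw [Finset.mem_filter, Finset.mem_Icc] at ha
    obtain ⟨⟨h1, h2⟩, c, rfl⟩ := ha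
    rw [Finset.mem_Icc, Nat.mul_div_cancel_left _ hds]
    constructor
    · by_contra hc; push_neg at hc
      interval_cases c
      omega
    · by_contra hc; push_neg at hc
      have : d ^ s * (e ^ s + 1) ≤ d ^ s * c := Nat.mul_le_mul_left _ hc
      rw [Nat.mul_add, mul_one, hrs] at this
      omega
  · intro j hj
    rw [Finset.mem_Icc] at hj
    rw [Finset.mem_filter, Finset.mem_Icc]
    refine ⟨⟨?_, ?_⟩, Dvd.intro j rfl⟩
    · calc 1 ≤ d ^ s := hds
        _ ≤ d ^ s * j := Nat.le_mul_of_pos_right _ (by omega)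
    · calc d ^ s * j ≤ d ^ s * e ^ s := Nat.mul_le_mul_left _ hj.2
        _ = r ^ s := hrs
  · intro a ha
    rw [Finset.mem_filter] at ha
    obtain ⟨c, hc⟩ := ha.2
    rw [hc, Nat.mul_div_cancel_left _ hds]
  · intro j hj
    rw [Nat.mul_div_cancel_left _ hds]
  · intro a ha
    rw [Finset.mem_filter] at ha
    obtain ⟨c, hc⟩ := ha.2
    rw [hc, Nat.mul_div_cancel_left _ hds]
    congr 1
    have hdc : ((d : ℂ) ^ s) ≠ 0 := pow_ne_zero _ (Nat.cast_ne_zero.mpr hd0.ne')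
    have hec : ((e : ℂ) ^ s) ≠ 0 := pow_ne_zero _ (Nat.cast_ne_zero.mpr he0.ne')
    have hrc : ((r : ℂ) ^ s) = (d : ℂ) ^ s * (e : ℂ) ^ s := by
      rw [← mul_pow]; norm_cast; rw [hde]
    push_cast
    rw [hrc]
    field_simp

lemma myAux_crs_formula (s r : ℕ) (hs : 0 < s) (hr : 0 < r) (n : ℕ) :
    cohenRamanujanSum s r n = ∑ d ∈ r.divisors,
      (ArithmeticFunction.moebius d : ℂ) *
        (if (r / d) ^ s ∣ n then (((r / d) ^ s : ℕ) : ℂ) else 0) := by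
  classical
  unfold cohenRamanujanSum
  have step1 : ∀ h ∈ Finset.Icc 1 (r ^ s),
      (if genGcd s h (r ^ s) = 1 then
          Complex.exp (2 * Real.pi * Complex.I * n * h / (r ^ s)) else 0)
      = ∑ d ∈ r.divisors, (if d ^ s ∣ h then
          (ArithmeticFunction.moebius d : ℂ) *
            Complex.exp (2 * Real.pi * Complex.I * n * h / (r ^ s)) else 0) := by
    intro h hh
    rw [Finset.mem_Icc] at hh
    have h0 : 0 < h := hh.1
    have hsplit : (if genGcd s h (r ^ s) = 1 then
        Complex.exp (2 * Real.pi * Complex.I * n * h / (r ^ s)) else 0)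
        = (if genGcd s h (r ^ s) = 1 then (1 : ℂ) else 0) *
            Complex.exp (2 * Real.pi * Complex.I * n * h / (r ^ s)) := by
      split <;> simp
    rw [hsplit, myAux_indicator_eq s r hs hr h h0, Finset.sum_mul]
    apply Finset.sum_congr rfl
    intro d _
    split <;> simp
  rw [Finset.sum_congr rfl step1, Finset.sum_comm]
  apply Finset.sum_congr rfl
  intro d hd
  rw [Nat.mem_divisors] at hd
  have hd0 : 0 < d := Nat.pos_of_dvd_of_pos hd.1 hr
  rw [← Finset.sum_filter, ← Finset.mul_sum, myAux_inner_sum s r n d hs hr hd.1 hd0]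

/-- If `h = m^s * k` with `k` an `s`-power free positive integer, then
`c_r^s(h) = c_r^s(m^s)` for every positive integer `r`. -/
theorem cohenRamanujanSum_spowerfree (s m k : ℕ) (hs : 0 < s) (hm : 0 < m) (hk : 0 < k)
    (hkfree : ∀ p : ℕ, p.Prime → ¬ p ^ s ∣ k) (r : ℕ) (hr : 0 < r) :
    cohenRamanujanSum s r (m ^ s * k) = cohenRamanujanSum s r (m ^ s) := by
  rw [myAux_crs_formula s r hs hr, myAux_crs_formula s r hs hr]
  apply Finset.sum_congr rfl
  intro d hd
  congr 1
  have hiff : (r / d) ^ s ∣ m ^ s * k ↔ (r / d) ^ s ∣ m ^ s := by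
    constructor
    · intro hdvd
      exact pow_dvd_pow_of_dvd (myAux_spowfree_dvd s m k hs hm hk hkfree (r / d) hdvd) s
    · intro hdvd
      exact hdvd.trans (dvd_mul_right _ k)
  simp only [hiff]
end
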